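/- arXiv:1910.11681 — 4 statements merged into one kernel-verified Lean document; each statement's English description precedes it below -/
import Mathlib

section
/- The recurrence c(n+1,j,k) = (1 + k + n + j − ℓ/2)·c(n,j,k) + c(n,j−1,k), with initial condition c(0,0,k)=1 and c(0,j,k)=0 for j≠0 (and c(n,−1,k)=0), has the unique solution c(n,j,k) = (Γ(n+1+k−ℓ/2)/Γ(j+1+k−ℓ/2)) · C(n,j), where the Gamma quotient means the product (j+1+k−ℓ/2)(j+2+k−ℓ/2)···(n+k−ℓ/2). -/
open Finset

/-- The recurrence `c(n+1,j,k) = (1+k+n+j-ℓ/2) c(n,j,k) + c(n,j-1,k)` with initial condition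
`c(0,0)=1`, `c(0,j)=0` for `j ≠ 0`, has the solution
`c(n,j) = (j+1+k-ℓ/2)(j+2+k-ℓ/2)⋯(n+k-ℓ/2) · C(n,j)` for `0 ≤ j ≤ n`. -/
theorem recurrence_solution_gamma_binomial (k l : ℝ) (c : ℕ → ℤ → ℝ)
    (h00 : c 0 0 = 1)
    (h0j : ∀ j : ℤ, j ≠ 0 → c 0 j = 0)
    (hrec : ∀ (n : ℕ) (j : ℤ), c (n + 1) j = (1 + k + n + j - l / 2) * c n j + c n (j - 1)) :
    ∀ (n j : ℕ), j ≤ n →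
      c n j = (∏ t ∈ Finset.range (n - j), ((j : ℝ) + 1 + k - l / 2 + t)) * (n.choose j : ℝ) := by
  have hneg : ∀ n : ℕ, ∀ j : ℤ, j < 0 → c n j = 0 := by
    intro n
    induction n with
    | zero => intro j hj; exact h0j j (by omega)
    | succ n ih =>
      intro j hj
      rw [hrec, ih j hj, ih (j - 1) (by omega)]
      ring
  have hhigh : ∀ n : ℕ, ∀ j : ℤ, (n : ℤ) < j → c n j = 0 := by
    intro n
    induction n with
    | zero => intro j hj; exact h0j j (by omega)
    | succ n ih =>
      intro j hj
      rw [hrec, ih j (by omega), ih (j - 1) (by omega)]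
      ring
  intro n
  induction n with
  | zero =>
    intro j hj
    interval_cases j
    simpa using h00
  | succ n ih =>
    intro j hj
    rw [hrec]
    match j, hj with
    | 0, _ =>
      have h1 : c n (((0 : ℕ) : ℤ) - 1) = 0 := by
        have := hneg n (-1) (by norm_num)
        simpa using this
      rw [h1, ih 0 (Nat.zero_le n)]
      simp only [Nat.sub_zero, Nat.choose_zero_right, Nat.cast_one, mul_one, add_zero,
        Finset.prod_range_succ, Nat.cast_zero]
      ring
    | j' + 1, hj =>
      by_cases hle : j' + 1 ≤ n
      · have hm : n - j' = (n - (j' + 1)) + 1 := by omega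
        set m := n - (j' + 1) with hmdef
        have h1 : c n (((j' + 1 : ℕ) : ℤ) - 1) = c n ((j' : ℕ) : ℤ) := by push_cast; ring_nf
        rw [h1, ih (j' + 1) hle, ih j' (by omega), hm]
        have hsplit : (n + 1) - (j' + 1) = m + 1 := by omega
        rw [hsplit, ← hmdef,
          Finset.prod_range_succ (fun t => (((j' + 1 : ℕ) : ℝ) + 1 + k - l / 2 + t)) m,
          Finset.prod_range_succ' (fun t => ((j' : ℝ) + 1 + k - l / 2 + t)) m]
        have hshift : (∏ t ∈ Finset.range m, ((j' : ℝ) + 1 + k - l / 2 + ((t + 1 : ℕ) : ℝ)))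
            = ∏ t ∈ Finset.range m, (((j' + 1 : ℕ) : ℝ) + 1 + k - l / 2 + t) := by
          apply Finset.prod_congr rfl
          intro t _
          push_cast
          ring
        rw [hshift]
        have hcast : (m : ℝ) = (n : ℝ) - (j' : ℝ) - 1 := by
          have h2 : (m : ℤ) = (n : ℤ) - j' - 1 := by omega
          have := congrArg (fun x : ℤ => (x : ℝ)) h2
          push_cast at this
          linarith
        have hab : (n.choose (j' + 1) : ℝ) * ((j' : ℝ) + 1) = (n.choose j' : ℝ) * ((n : ℝ) - (j' : ℝ)) := by
          have h3 := Nat.choose_succ_right_eq n j'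
          have h4 : ((n.choose (j' + 1) * (j' + 1) : ℕ) : ℝ) = ((n.choose j' * (n - j') : ℕ) : ℝ) := by
            exact_mod_cast congrArg (fun x : ℕ => (x : ℝ)) h3
          push_cast [Nat.cast_sub (by omega : j' ≤ n)] at h4
          linarith
        rw [Nat.choose_succ_succ]
        push_cast
        set P := ∏ t ∈ Finset.range m, (((j' : ℝ) + 1) + 1 + k - l / 2 + t) with hP
        linear_combination P * hab - ((n.choose (j' + 1) : ℝ) + (n.choose j' : ℝ)) * P * hcast
      · have hj1 : j' = n := by omega
        subst hj1
        have h0 : c j' ((j' + 1 : ℕ) : ℤ) = 0 := by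
          apply hhigh
          push_cast
          omega
        have h1 : c j' (((j' + 1 : ℕ) : ℤ) - 1) = c j' ((j' : ℕ) : ℤ) := by push_cast; ring_nf
        rw [h0, h1, ih j' le_rfl]
        simp
end

section
/- The rescaled Gegenbauer polynomial G_N^s(x,y) := (N!·Γ(s)/Γ(s+⌈N/2⌉))·g_N^s(x,y), where g_N^s(x,y) = ∑_{2n₁+n₂=N} (−1)^{n₁}(Γ(s+n₁+n₂)/(Γ(s)n₁!n₂!))x^{n₂}y^{n₁}, has coefficients in ℤ[s]; i.e., G_N^s(x,y) ∈ ℤ[x,y,s]. -/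
open Finset MvPolynomial

/-- The rescaled Gegenbauer polynomial
`G_N^s(x,y) = (N! Γ(s)/Γ(s+⌈N/2⌉)) ∑_{2n₁+n₂=N} (-1)^{n₁} (Γ(s+n₁+n₂)/(Γ(s) n₁! n₂!))
x^{n₂} y^{n₁}`, written with the Gamma quotients expanded as rising factorials, so that
`N! Γ(s+n₁+n₂)/Γ(s+⌈N/2⌉) = N! ∏_{j=⌈N/2⌉}^{n₁+n₂-1} (s+j)` (using `n₁+n₂ = N-n₁ ≥ ⌈N/2⌉`).
Here the variables are `X 0 = x`, `X 1 = y`, `X 2 = s` in `ℚ[x,y,s]`. -/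
noncomputable def GGegenbauer (N : ℕ) : MvPolynomial (Fin 3) ℚ :=
  ∑ n₁ ∈ Finset.range (N / 2 + 1),
    (((-1 : ℚ) ^ n₁ * (N.factorial : ℚ) /
        ((n₁.factorial : ℚ) * ((N - 2 * n₁).factorial : ℚ))) •
      ((∏ j ∈ Finset.Ico ((N + 1) / 2) (N - n₁), (X 2 + C (j : ℚ))) *
        X 0 ^ (N - 2 * n₁) * X 1 ^ n₁))

/-- `G_N^s(x,y) ∈ ℤ[x,y,s]`: the rescaled Gegenbauer polynomial has integer coefficients. -/
theorem GGegenbauer_integral (N : ℕ) :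
    ∃ P : MvPolynomial (Fin 3) ℤ, MvPolynomial.map (Int.castRingHom ℚ) P = GGegenbauer N := by
  refine ⟨∑ n₁ ∈ Finset.range (N / 2 + 1),
    (C ((-1 : ℤ) ^ n₁ * (N.choose n₁ : ℤ) * ((N - n₁).descFactorial n₁ : ℤ)) *
      ((∏ j ∈ Finset.Ico ((N + 1) / 2) (N - n₁), (X 2 + C (j : ℤ))) *
        X 0 ^ (N - 2 * n₁) * X 1 ^ n₁)), ?_⟩
  rw [GGegenbauer, map_sum]
  refine Finset.sum_congr rfl fun n₁ hn₁ => ?_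
  have hle : n₁ ≤ N := le_trans (Nat.lt_succ_iff.mp (Finset.mem_range.mp hn₁))
    (Nat.div_le_self N 2)
  have h2 : n₁ ≤ N - n₁ := by
    have := Nat.lt_succ_iff.mp (Finset.mem_range.mp hn₁)
    omega
  have hfac : (N.factorial : ℚ) =
      ((N.choose n₁ : ℤ) * ((N - n₁).descFactorial n₁ : ℤ) : ℤ) *
        ((n₁.factorial : ℚ) * ((N - 2 * n₁).factorial : ℚ)) := by
    have h1 : N.choose n₁ * n₁.factorial * (N - n₁).factorial = N.factorial :=
      Nat.choose_mul_factorial_mul_factorial hle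
    have h3 : (N - n₁ - n₁).factorial * (N - n₁).descFactorial n₁ = (N - n₁).factorial :=
      Nat.factorial_mul_descFactorial h2
    have h4 : N - n₁ - n₁ = N - 2 * n₁ := by omega
    rw [h4] at h3
    have hnat : N.factorial =
        N.choose n₁ * (N - n₁).descFactorial n₁ * (n₁.factorial * (N - 2 * n₁).factorial) := by
      rw [← h1, ← h3]; ring
    rw [hnat]; push_cast; ring
  have hne : (n₁.factorial : ℚ) * ((N - 2 * n₁).factorial : ℚ) ≠ 0 := by
    positivity
  have hcoef : (Int.castRingHom ℚ)
      ((-1 : ℤ) ^ n₁ * (N.choose n₁ : ℤ) * ((N - n₁).descFactorial n₁ : ℤ)) =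
      (-1 : ℚ) ^ n₁ * (N.factorial : ℚ) /
        ((n₁.factorial : ℚ) * ((N - 2 * n₁).factorial : ℚ)) := by
    rw [eq_div_iff hne, hfac]
    simp only [eq_intCast]
    push_cast
    ring
  rw [smul_eq_C_mul, map_mul, MvPolynomial.map_C, hcoef]
  congr 1
  simp only [map_mul, map_prod, map_pow, map_add, MvPolynomial.map_C, MvPolynomial.map_X,
    eq_intCast, Int.cast_natCast, map_natCast, MvPolynomial.C_eq_coe_nat]
end

section
/- As formal power series in x and y, for any k with 2k−1 not a nonpositive integer: ∑_{N≥0} (Γ(2k+N−1)/Γ(k+N)) ∑_{r+s=N} C(k+N−1, r)·C(k+N−1, s)·x^r y^s = (Γ(2k−1)/Γ(k))·(1 − 2(x+y) + (x−y)²)^{1/2−k}. -/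
open Finset MvPolynomial

/-- The generalized binomial coefficient `C(a,r) = a(a-1)⋯(a-r+1)/r!`. -/
noncomputable def genBinom (a : ℝ) (r : ℕ) : ℝ :=
  (∏ t ∈ Finset.range r, (a - t)) / (r.factorial : ℝ)

/-- The polynomial `1 - 2(x+y) + (x-y)²` is `1 - u` with `u = 2(x+y) - (x-y)²`. -/
noncomputable def uPoly : MvPolynomial (Fin 2) ℝ :=
  2 * (X 0 + X 1) - (X 0 - X 1) ^ 2

-- contiguous relation
lemma genBinom_contig (a : ℝ) (m : ℕ) :
    ((m : ℝ) + 1) * genBinom a (m + 1) = (a - m) * genBinom a m := by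
  unfold genBinom
  rw [Finset.prod_range_succ, Nat.factorial_succ]
  push_cast
  have h1 : (m.factorial : ℝ) ≠ 0 := Nat.cast_ne_zero.mpr m.factorial_ne_zero
  field_simp

-- (r+1) * genBinom (a+1) (r+1) = (a+1) * genBinom a r
lemma genBinom_shift1 (a : ℝ) (r : ℕ) :
    ((r : ℝ) + 1) * genBinom (a + 1) (r + 1) = (a + 1) * genBinom a r := by
  unfold genBinom
  have h0 : ∏ t ∈ Finset.range (r+1), (a + 1 - t) = (a+1) * ∏ t ∈ Finset.range r, (a - t) := by
    rw [Finset.prod_range_succ']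
    rw [mul_comm]
    congr 1
    · norm_num
    · apply Finset.prod_congr rfl
      intro t _
      push_cast
      ring
  rw [h0, Nat.factorial_succ]
  push_cast
  have h1 : (r.factorial : ℝ) ≠ 0 := Nat.cast_ne_zero.mpr r.factorial_ne_zero
  field_simp

-- (a+1-s) * genBinom (a+1) s = (a+1) * genBinom a s
lemma genBinom_shift2 (a : ℝ) (s : ℕ) :
    (a + 1 - s) * genBinom (a + 1) s = (a + 1) * genBinom a s := by
  unfold genBinom
  have h0 : (∏ t ∈ Finset.range s, (a + 1 - t)) * (a + 1 - s)
      = (a + 1) * ∏ t ∈ Finset.range s, (a - t) := by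
    have h1 : (∏ t ∈ Finset.range (s+1), (a + 1 - t))
        = (∏ t ∈ Finset.range s, (a + 1 - t)) * (a + 1 - s) := by
      rw [Finset.prod_range_succ]
    have h2 : (∏ t ∈ Finset.range (s+1), (a + 1 - t))
        = (a + 1) * ∏ t ∈ Finset.range s, (a - t) := by
      rw [Finset.prod_range_succ']
      rw [mul_comm]
      congr 1
      · norm_num
      · apply Finset.prod_congr rfl
        intro t _
        push_cast
        ring
    rw [← h1, h2]
  rw [mul_div_assoc', mul_div_assoc']
  congr 1
  linear_combination h0

-- coeff of pderiv
lemma coeff_pderiv (i : Fin 2) (p : MvPolynomial (Fin 2) ℝ) (d : Fin 2 →₀ ℕ) :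
    coeff d (pderiv i p) = ((d i : ℝ) + 1) * coeff (d + Finsupp.single i 1) p := by
  induction p using MvPolynomial.induction_on' with
  | monomial u a =>
    rw [pderiv_monomial, coeff_monomial, coeff_monomial]
    by_cases h : u = d + Finsupp.single i 1
    · subst h
      rw [if_pos (add_tsub_cancel_right d (Finsupp.single i 1)), if_pos rfl]
      simp [Finsupp.add_apply]
      ring
    · rw [if_neg h]
      by_cases h2 : u - Finsupp.single i 1 = d
      · rw [if_pos h2]
        by_cases h3 : u i = 0
        · simp [h3]
        · exfalso
          apply h
          rw [← h2]
          rw [tsub_add_cancel_of_le]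
          rwa [Finsupp.single_le_iff, Nat.one_le_iff_ne_zero]
      · rw [if_neg h2]; ring
  | add p q hp hq =>
    rw [map_add, coeff_add, coeff_add, hp, hq]; ring

lemma uPoly_split : uPoly = X 0 * (2 - X 0 + X 1) + X 1 * (2 + X 0 - X 1) := by
  unfold uPoly; ring

lemma uPoly_mul (h : MvPolynomial (Fin 2) ℝ) :
    uPoly * h = X 0 * ((2 - X 0 + X 1) * h) + X 1 * ((2 + X 0 - X 1) * h) := by
  rw [uPoly_split]; ring

lemma sub_single_apply_self (d : Fin 2 →₀ ℕ) (i : Fin 2) :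
    ((d - Finsupp.single i 1) : Fin 2 →₀ ℕ) i = d i - 1 := by
  rw [Finsupp.tsub_apply, Finsupp.single_eq_same]

lemma sub_single_apply_ne (d : Fin 2 →₀ ℕ) {i j : Fin 2} (h : i ≠ j) :
    ((d - Finsupp.single i 1) : Fin 2 →₀ ℕ) j = d j := by
  rw [Finsupp.tsub_apply, Finsupp.single_eq_of_ne' h, Nat.sub_zero]

lemma coeff_vanish : ∀ (j : ℕ) (g : MvPolynomial (Fin 2) ℝ) (d : Fin 2 →₀ ℕ),
    d 0 + d 1 < j → coeff d (g * uPoly ^ j) = 0 := by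
  intro j
  induction j with
  | zero => intro g d h; omega
  | succ n ih =>
    intro g d h
    classical
    have e : g * uPoly ^ (n + 1) = uPoly * (g * uPoly ^ n) := by rw [pow_succ]; ring
    rw [e, uPoly_mul, coeff_add, coeff_X_mul', coeff_X_mul']
    by_cases h0 : (0 : Fin 2) ∈ d.support
    · rw [if_pos h0]
      have hd0 : d 0 ≠ 0 := Finsupp.mem_support_iff.mp h0
      have v0 : coeff (d - Finsupp.single 0 1) (((2 - X 0 + X 1) * g) * uPoly ^ n) = 0 := by
        apply ih
        rw [sub_single_apply_self, sub_single_apply_ne d (by decide : (0:Fin 2) ≠ 1)]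
        omega
      rw [show (2 - X 0 + X 1) * (g * uPoly ^ n) = ((2 - X 0 + X 1) * g) * uPoly ^ n by ring, v0]
      by_cases h1 : (1 : Fin 2) ∈ d.support
      · rw [if_pos h1]
        have hd1 : d 1 ≠ 0 := Finsupp.mem_support_iff.mp h1
        have v1 : coeff (d - Finsupp.single 1 1) (((2 + X 0 - X 1) * g) * uPoly ^ n) = 0 := by
          apply ih
          rw [sub_single_apply_self, sub_single_apply_ne d (by decide : (1:Fin 2) ≠ 0)]
          omega
        rw [show (2 + X 0 - X 1) * (g * uPoly ^ n) = ((2 + X 0 - X 1) * g) * uPoly ^ n by ring,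
          v1]
        ring
      · rw [if_neg h1]; ring
    · rw [if_neg h0]
      by_cases h1 : (1 : Fin 2) ∈ d.support
      · rw [if_pos h1]
        have hd1 : d 1 ≠ 0 := Finsupp.mem_support_iff.mp h1
        have hd0 : d 0 = 0 := by
          by_contra hc; exact h0 (Finsupp.mem_support_iff.mpr hc)
        have v1 : coeff (d - Finsupp.single 1 1) (((2 + X 0 - X 1) * g) * uPoly ^ n) = 0 := by
          apply ih
          rw [sub_single_apply_self, sub_single_apply_ne d (by decide : (1:Fin 2) ≠ 0)]
          omega
        rw [show (2 + X 0 - X 1) * (g * uPoly ^ n) = ((2 + X 0 - X 1) * g) * uPoly ^ n by ring,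
          v1]
        ring
      · rw [if_neg h1]; ring

noncomputable def P1 (k : ℝ) : MvPolynomial (Fin 2) ℝ :=
  (2)*C k + (-4)*C k*X 1 + (2)*X 1^2 + (6)*C k*X 1^2 + (-2)*X 0 + (-8)*C k*X 0 + (-4)*X 0*X 1 + (-12)*C k*X 0*X 1 + (2)*X 0^2 + (6)*C k*X 0^2

noncomputable def P2 : MvPolynomial (Fin 2) ℝ :=
  (-4)*X 1^2 + (8)*X 1^3 + (-4)*X 1^4 + (4)*X 0 + (-4)*X 0*X 1^2 + (16)*X 0*X 1^3 + (-12)*X 0^2 + (-16)*X 0^2*X 1 + (-24)*X 0^2*X 1^2 + (12)*X 0^3 + (16)*X 0^3*X 1 + (-4)*X 0^4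

noncomputable def L0 (k : ℝ) : MvPolynomial (Fin 2) ℝ :=
  (-4)*C k*X 1 + (2)*C k*X 1^2 + (-4)*X 1^3 + (8)*C k*X 1^3 + (2)*X 1^4 + (-4)*C k*X 1^4 + (-4)*C k*X 0 + (4)*X 0*X 1 + (-12)*C k*X 0*X 1 + (2)*X 0*X 1^2 + (-4)*C k*X 0*X 1^2 + (-8)*X 0*X 1^3 + (16)*C k*X 0*X 1^3 + (4)*X 0^2 + (-6)*C k*X 0^2 + (8)*X 0^2*X 1 + (-16)*C k*X 0^2*X 1 + (12)*X 0^2*X 1^2 + (-24)*C k*X 0^2*X 1^2 + (-6)*X 0^3 + (12)*C k*X 0^3 + (-8)*X 0^3*X 1 + (16)*C k*X 0^3*X 1 + (2)*X 0^4 + (-4)*C k*X 0^4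

noncomputable def L1 : MvPolynomial (Fin 2) ℝ :=
  (8)*X 1^3 + (-4)*X 1^4 + (-8)*X 0*X 1 + (-4)*X 0*X 1^2 + (16)*X 0*X 1^3 + (-8)*X 0^2 + (-16)*X 0^2*X 1 + (-24)*X 0^2*X 1^2 + (12)*X 0^3 + (16)*X 0^3*X 1 + (-4)*X 0^4

-- certificate identity
lemma cert (k j : ℝ) :
    uPoly * (C ((1-2*k-2*j)*(1-2*k-2*j-2)) * P2 + C (-2*(1-2*k-2*j)) * P1 k
        + C (-(4*k*(2*k-1))))
    = C (-(4*j*j)) * L1 + C (-(4*j)) * L0 k + C (-(2*(1-2*k-2*j))*(j+1)) * (L1 * uPoly)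
        + C (-(2*(1-2*k-2*j))) * (L0 k * uPoly) := by
  simp only [map_mul, map_sub, map_add, map_one, map_ofNat, map_neg]
  unfold uPoly P1 P2 L0 L1
  ring

noncomputable def Ee (p : MvPolynomial (Fin 2) ℝ) : MvPolynomial (Fin 2) ℝ :=
  X 0 * pderiv 0 p + X 1 * pderiv 1 p

lemma C2eq : (C (2:ℝ) : MvPolynomial (Fin 2) ℝ) = 2 := map_ofNat C 2

lemma pd2 (i : Fin 2) : pderiv i ((2 : MvPolynomial (Fin 2) ℝ)) = 0 := by
  rw [← C2eq]; exact pderiv_C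

lemma pderiv0_u : pderiv 0 uPoly = 2 - 2 * X 0 + 2 * X 1 := by
  have h : uPoly = (X 0 + X 1) + (X 0 + X 1) - (X 0 - X 1)^2 := by
    unfold uPoly; ring
  rw [h]
  simp only [map_sub, map_add, pderiv_pow, pderiv_X_self,
    pderiv_X_of_ne (by decide : (1:Fin 2) ≠ 0)]
  push_cast
  ring

lemma pderiv1_u : pderiv 1 uPoly = 2 + 2 * X 0 - 2 * X 1 := by
  have h : uPoly = (X 0 + X 1) + (X 0 + X 1) - (X 0 - X 1)^2 := by
    unfold uPoly; ring
  rw [h]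
  simp only [map_sub, map_add, pderiv_pow, pderiv_X_self,
    pderiv_X_of_ne (by decide : (0:Fin 2) ≠ 1)]
  push_cast
  ring

lemma pderiv_u_pow (i : Fin 2) (t : ℕ) :
    pderiv i (uPoly ^ t) = C (t : ℝ) * (uPoly ^ (t - 1) * pderiv i uPoly) := by
  rw [pderiv_pow, C_eq_coe_nat]
  ring

set_option maxHeartbeats 3000000 in
lemma lemP (k : ℝ) (m : ℕ) :
    C k * pderiv 0 (uPoly ^ m) + X 0 * pderiv 0 (pderiv 0 (uPoly ^ m))
      - C (3*k-1) * Ee (uPoly ^ m) - Ee (Ee (uPoly ^ m))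
    = C (m : ℝ) * (uPoly ^ (m-1) * P1 k)
      + C ((m : ℝ) * ((m : ℝ) - 1)) * (uPoly ^ (m-2) * P2) := by
  cases m with
  | zero => simp [Ee]
  | succ n =>
    have e1 : (n + 1 - 1 : ℕ) = n := rfl
    have e2 : (n + 1 - 2 : ℕ) = n - 1 := rfl
    simp only [Ee, e1, e2, pderiv_u_pow, pderiv0_u, pderiv1_u, pderiv_mul, pderiv_C_mul,
      map_add, map_sub, pderiv_C, pderiv_one, pd2, pderiv_X_self,
      pderiv_X_of_ne (by decide : (1:Fin 2) ≠ 0), pderiv_X_of_ne (by decide : (0:Fin 2) ≠ 1)]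
    rw [show ((n+1 : ℕ) : ℝ) = (n : ℝ) + 1 by push_cast; ring]
    rw [show (C ((n:ℝ)+1) : MvPolynomial (Fin 2) ℝ) = C (n:ℝ) + 1 by rw [map_add, map_one]]
    rw [show (C (((n:ℝ)+1) * ((n:ℝ)+1-1)) : MvPolynomial (Fin 2) ℝ)
        = (C (n:ℝ) + 1) * C (n:ℝ) by rw [map_mul, map_add, map_one]; ring_nf]
    simp only [map_mul, map_one, map_ofNat]
    unfold P1 P2
    ring

noncomputable def sg (a b : ℕ) : Fin 2 →₀ ℕ := Finsupp.single 0 a + Finsupp.single 1 b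

lemma sg_apply0 (a b : ℕ) : sg a b 0 = a := by
  simp [sg, Finsupp.single_apply]

lemma sg_apply1 (a b : ℕ) : sg a b 1 = b := by
  simp [sg, Finsupp.single_apply]

lemma sg_add_e0 (a b : ℕ) : sg a b + Finsupp.single 0 1 = sg (a+1) b := by
  simp only [sg, Finsupp.single_add]
  abel

lemma sg_add_e1 (a b : ℕ) : sg a b + Finsupp.single 1 1 = sg a (b+1) := by
  simp only [sg, Finsupp.single_add]
  abel

lemma coeff_pd0 (a b : ℕ) (p : MvPolynomial (Fin 2) ℝ) :
    coeff (sg a b) (pderiv 0 p) = ((a:ℝ)+1) * coeff (sg (a+1) b) p := by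
  rw [coeff_pderiv, sg_apply0, sg_add_e0]

lemma coeff_pd1 (a b : ℕ) (p : MvPolynomial (Fin 2) ℝ) :
    coeff (sg a b) (pderiv 1 p) = ((b:ℝ)+1) * coeff (sg a (b+1)) p := by
  rw [coeff_pderiv, sg_apply1, sg_add_e1]

lemma coeff_X0_mul_succ (a b : ℕ) (p : MvPolynomial (Fin 2) ℝ) :
    coeff (sg (a+1) b) (X 0 * p) = coeff (sg a b) p := by
  rw [← sg_add_e0, add_comm (sg a b), coeff_X_mul]

lemma coeff_X1_mul_succ (a b : ℕ) (p : MvPolynomial (Fin 2) ℝ) :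
    coeff (sg a (b+1)) (X 1 * p) = coeff (sg a b) p := by
  rw [← sg_add_e1, add_comm (sg a b), coeff_X_mul]

lemma coeff_X0_mul_zero (b : ℕ) (p : MvPolynomial (Fin 2) ℝ) :
    coeff (sg 0 b) (X 0 * p) = 0 := by
  classical
  rw [coeff_X_mul', if_neg]
  simp [Finsupp.mem_support_iff, sg_apply0]

lemma coeff_X1_mul_zero (a : ℕ) (p : MvPolynomial (Fin 2) ℝ) :
    coeff (sg a 0) (X 1 * p) = 0 := by
  classical
  rw [coeff_X_mul', if_neg]
  simp [Finsupp.mem_support_iff, sg_apply1]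

lemma coeff_X0_pd0 (a b : ℕ) (p : MvPolynomial (Fin 2) ℝ) :
    coeff (sg a b) (X 0 * pderiv 0 p) = (a:ℝ) * coeff (sg a b) p := by
  cases a with
  | zero => rw [coeff_X0_mul_zero]; simp
  | succ a' => rw [coeff_X0_mul_succ, coeff_pd0]; push_cast; ring

lemma coeff_X1_pd1 (a b : ℕ) (p : MvPolynomial (Fin 2) ℝ) :
    coeff (sg a b) (X 1 * pderiv 1 p) = (b:ℝ) * coeff (sg a b) p := by
  cases b with
  | zero => rw [coeff_X1_mul_zero]; simp
  | succ b' => rw [coeff_X1_mul_succ, coeff_pd1]; push_cast; ring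

lemma coeff_Ee (a b : ℕ) (p : MvPolynomial (Fin 2) ℝ) :
    coeff (sg a b) (Ee p) = ((a:ℝ)+(b:ℝ)) * coeff (sg a b) p := by
  rw [Ee, coeff_add, coeff_X0_pd0, coeff_X1_pd1]; ring

lemma uPoly_ne_zero : uPoly ≠ 0 := by
  intro h
  have h2 := congrArg (eval (fun i : Fin 2 => if i = 0 then (1:ℝ) else 0)) h
  simp [uPoly] at h2
  norm_num at h2

lemma shift (al : ℝ) (t lam : ℕ → ℝ) (M : ℕ) (hvan : t (M - 1) = 0) :
    ∑ m ∈ range M, (-1:ℝ)^m * genBinom al m * ((m:ℝ) * lam m) * t (m-1)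
    = -∑ m ∈ range M, (-1:ℝ)^m * genBinom al m * ((al - m) * lam (m+1)) * t m := by
  cases M with
  | zero => simp
  | succ n =>
    rw [Finset.sum_range_succ'
      (fun m => (-1:ℝ)^m * genBinom al m * ((m:ℝ) * lam m) * t (m-1)) n]
    rw [Finset.sum_range_succ
      (fun m => (-1:ℝ)^m * genBinom al m * ((al - m) * lam (m+1)) * t m) n]
    have h0 : ((0:ℕ):ℝ) = 0 := by norm_num
    simp only [h0, Nat.cast_zero, zero_mul, mul_zero, add_zero]
    have hn : t n = 0 := by simpa using hvan
    rw [hn]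
    simp only [mul_zero, zero_mul, add_zero]
    rw [eq_neg_iff_add_eq_zero, ← Finset.sum_add_distrib]
    apply Finset.sum_eq_zero
    intro i _
    have hc := genBinom_contig al i
    have he : (i + 1 - 1 : ℕ) = i := rfl
    rw [he]
    push_cast
    linear_combination ((-1:ℝ)^(i+1) * lam (i+1) * t i) * hc

-- NEW MATERIAL
noncomputable def RR (k : ℝ) (r s : ℕ) : ℝ :=
  ∑ m ∈ range (r + s + 1), genBinom (1/2-k) m * (-1:ℝ)^m * coeff (sg r s) (uPoly ^ m)

noncomputable def QA : MvPolynomial (Fin 2) ℝ :=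
  (4) + (-4)*X 1^2 + (16)*X 1^3 + (-12)*X 0 + (-16)*X 0*X 1 + (-24)*X 0*X 1^2 + (12)*X 0^2 + (16)*X 0^2*X 1 + (-4)*X 0^3

noncomputable def QB : MvPolynomial (Fin 2) ℝ :=
  (-4)*X 1 + (8)*X 1^2 + (-4)*X 1^3

lemma vanishP2 (r s : ℕ) : coeff (sg r s) (uPoly ^ (r+s) * P2) = 0 := by
  have key : coeff (sg r s) (uPoly ^ (r+s) * P2)
      = coeff (sg r s) (X 0 * (QA * uPoly ^ (r+s))) + coeff (sg r s) (X 1 * (QB * uPoly ^ (r+s))) := by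
    rw [← coeff_add]
    congr 1
    unfold P2 QA QB
    ring
  rw [key]
  have h1 : coeff (sg r s) (X 0 * (QA * uPoly ^ (r+s))) = 0 := by
    cases r with
    | zero => exact coeff_X0_mul_zero _ _
    | succ a =>
      rw [coeff_X0_mul_succ]
      apply coeff_vanish
      rw [sg_apply0, sg_apply1]
      omega
  have h2 : coeff (sg r s) (X 1 * (QB * uPoly ^ (r+s))) = 0 := by
    cases s with
    | zero => exact coeff_X1_mul_zero _ _
    | succ bb =>
      rw [coeff_X1_mul_succ]
      apply coeff_vanish
      rw [sg_apply0, sg_apply1]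
      omega
  rw [h1, h2]; ring

set_option maxHeartbeats 4000000 in
lemma Rrec (k : ℝ) (r s : ℕ) :
    ((r:ℝ)+1) * (k + r) * RR k (r+1) s
      = (2*k + ((r:ℝ)+s) - 1) * (k + ((r:ℝ)+s)) * RR k r s := by
  classical
  have hal : (1:ℝ)/2 - k = 1/2 - k := rfl
  set al : ℝ := 1/2 - k with hal2
  set t1 : ℕ → ℝ := fun m => coeff (sg r s) (uPoly^m * P1 k) with ht1
  set t2 : ℕ → ℝ := fun m => coeff (sg r s) (uPoly^m * P2) with ht2
  set tL1 : ℕ → ℝ := fun m => coeff (sg r s) (uPoly^m * L1) with htL1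
  set tL0 : ℕ → ℝ := fun m => coeff (sg r s) (uPoly^m * L0 k) with htL0
  set c1 : ℕ → ℝ := fun m => coeff (sg r s) (uPoly^m) with hc1
  set c2 : ℕ → ℝ := fun m => coeff (sg (r+1) s) (uPoly^m) with hc2
  set b : ℕ → ℝ := fun m => genBinom al m with hbd
  -- vanishing facts
  have vg : ∀ (g : MvPolynomial (Fin 2) ℝ) (j : ℕ), r + s < j →
      coeff (sg r s) (uPoly ^ j * g) = 0 := by
    intro g j hj
    rw [mul_comm]
    apply coeff_vanish
    rw [sg_apply0, sg_apply1]
    exact hj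
  have vc1 : ∀ j, r + s < j → c1 j = 0 := by
    intro j hj
    have := vg 1 j hj
    rw [mul_one] at this
    exact this
  -- step A : per-m scalar identity
  have hA : ∀ m : ℕ, ((r:ℝ)+1) * (k + r) * c2 m
      = ((3*k-1)*((r:ℝ)+s) + ((r:ℝ)+s)^2) * c1 m
        + (m:ℝ) * t1 (m-1) + (m:ℝ)*((m:ℝ)-1) * t2 (m-2) := by
    intro m
    have h := congrArg (coeff (sg r s)) (lemP k m)
    simp only [coeff_add, coeff_sub, coeff_C_mul, coeff_Ee, coeff_X0_pd0, coeff_pd0] at h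
    rw [ht1, ht2, hc1, hc2]
    simp only []
    linear_combination h
  -- certificate, scalar form
  have hq : ∀ m : ℕ,
      (al-(m:ℝ))*(al-(m:ℝ)-1) * t2 m - (al-(m:ℝ)) * t1 m - k*(2*k-1) * c1 m
      = -(m:ℝ)*((m:ℝ)*tL1 (m-1) + tL0 (m-1))
        - (al-(m:ℝ))*(((m:ℝ)+1)*tL1 m + tL0 m) := by
    intro m
    cases m with
    | zero =>
      have hc := cert k 0
      have e0 : (-(4*(0:ℝ)*0)) = 0 := by norm_num
      have e1 : (-(4*(0:ℝ))) = 0 := by norm_num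
      rw [e0, e1, map_zero, zero_mul, zero_mul, zero_add, zero_add] at hc
      have hc2 : uPoly * (C ((1-2*k-2*(0:ℝ))*(1-2*k-2*(0:ℝ)-2)) * P2 + C (-2*(1-2*k-2*(0:ℝ))) * P1 k
          + C (-(4*k*(2*k-1))))
          = uPoly * (C (-(2*(1-2*k-2*(0:ℝ)))*((0:ℝ)+1)) * L1 + C (-(2*(1-2*k-2*(0:ℝ)))) * L0 k) := by
        rw [hc]; ring
      have hc3 := mul_left_cancel₀ uPoly_ne_zero hc2
      have h := congrArg (fun p => coeff (sg r s) (uPoly ^ 0 * p)) hc3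
      rw [show uPoly ^ 0 * (C ((1-2*k-2*(0:ℝ))*(1-2*k-2*(0:ℝ)-2)) * P2 + C (-2*(1-2*k-2*(0:ℝ))) * P1 k + C (-(4*k*(2*k-1))))
          = C ((1-2*k-2*(0:ℝ))*(1-2*k-2*(0:ℝ)-2)) * (uPoly ^ 0 * P2) + C (-2*(1-2*k-2*(0:ℝ))) * (uPoly ^ 0 * P1 k) + C (-(4*k*(2*k-1))) * (uPoly ^ 0) from by ring,
        show uPoly ^ 0 * (C (-(2*(1-2*k-2*(0:ℝ)))*((0:ℝ)+1)) * L1 + C (-(2*(1-2*k-2*(0:ℝ)))) * L0 k)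
          = C (-(2*(1-2*k-2*(0:ℝ)))*((0:ℝ)+1)) * (uPoly ^ 0 * L1) + C (-(2*(1-2*k-2*(0:ℝ)))) * (uPoly ^ 0 * L0 k) from by ring] at h
      simp only [coeff_add, coeff_C_mul] at h
      rw [ht1, ht2, htL1, htL0, hc1]
      simp only []
      push_cast
      linear_combination (1/4) * h
    | succ n =>
      have hc := cert k ((n:ℝ)+1)
      have h := congrArg (fun p => coeff (sg r s) (p * uPoly ^ n)) hc
      rw [show (uPoly * (C ((1-2*k-2*((n:ℝ)+1))*(1-2*k-2*((n:ℝ)+1)-2)) * P2 + C (-2*(1-2*k-2*((n:ℝ)+1))) * P1 k + C (-(4*k*(2*k-1))))) * uPoly ^ n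
          = C ((1-2*k-2*((n:ℝ)+1))*(1-2*k-2*((n:ℝ)+1)-2)) * (uPoly ^ (n+1) * P2)
            + C (-2*(1-2*k-2*((n:ℝ)+1))) * (uPoly ^ (n+1) * P1 k)
            + C (-(4*k*(2*k-1))) * (uPoly ^ (n+1)) from by ring,
        show (C (-(4*((n:ℝ)+1)*((n:ℝ)+1))) * L1 + C (-(4*((n:ℝ)+1))) * L0 k
              + C (-(2*(1-2*k-2*((n:ℝ)+1)))*(((n:ℝ)+1)+1)) * (L1 * uPoly)
              + C (-(2*(1-2*k-2*((n:ℝ)+1)))) * (L0 k * uPoly)) * uPoly ^ n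
          = C (-(4*((n:ℝ)+1)*((n:ℝ)+1))) * (uPoly ^ n * L1) + C (-(4*((n:ℝ)+1))) * (uPoly ^ n * L0 k)
            + C (-(2*(1-2*k-2*((n:ℝ)+1)))*(((n:ℝ)+1)+1)) * (uPoly ^ (n+1) * L1)
            + C (-(2*(1-2*k-2*((n:ℝ)+1)))) * (uPoly ^ (n+1) * L0 k) from by ring] at h
      simp only [coeff_add, coeff_C_mul] at h
      rw [ht1, ht2, htL1, htL0, hc1]
      simp only []
      have en : (n + 1 - 1 : ℕ) = n := rfl
      rw [en]
      push_cast
      linear_combination (1/4) * h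
  -- vanishing facts at the top of range
  set M : ℕ := r + s + 2 with hM
  have v_t1 : t1 (M-1) = 0 := vg _ _ (by omega)
  have v_t2 : t2 (M-1) = 0 := vg _ _ (by omega)
  have v_t2' : t2 ((M-1) - 1) = 0 := by
    rw [show (M-1) - 1 = r + s from by omega]
    exact vanishP2 r s
  have v_tL1 : tL1 (M-1) = 0 := vg _ _ (by omega)
  have v_tL0 : tL0 (M-1) = 0 := vg _ _ (by omega)
  -- LHS as sum over range M
  have hRR1 : RR k (r+1) s = ∑ m ∈ range M, genBinom al m * (-1:ℝ)^m * c2 m := by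
    rw [RR, show r + 1 + s + 1 = M from by omega]
  have hRR0 : ∑ m ∈ range M, genBinom al m * (-1:ℝ)^m * c1 m = RR k r s := by
    rw [hM, RR, Finset.sum_range_succ, vc1 (r+s+1) (by omega)]
    rw [mul_zero, add_zero]
  -- expand LHS using hA
  have key2 : ((r:ℝ)+1) * (k + r) * RR k (r+1) s
      = ((3*k-1)*((r:ℝ)+s) + ((r:ℝ)+s)^2) * (∑ m ∈ range M, genBinom al m * (-1:ℝ)^m * c1 m)
        + (∑ m ∈ range M, (-1:ℝ)^m * genBinom al m * ((m:ℝ) * 1) * t1 (m-1))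
        + (∑ m ∈ range M, (-1:ℝ)^m * genBinom al m * ((m:ℝ) * (((m:ℝ))-1) * 1) * t2 (m-2)) := by
    rw [hRR1, Finset.mul_sum, Finset.mul_sum, ← Finset.sum_add_distrib, ← Finset.sum_add_distrib]
    apply Finset.sum_congr rfl
    intro m _
    have := hA m
    linear_combination genBinom al m * (-1:ℝ)^m * this
  -- shift the t1 sum
  have s1 : ∑ m ∈ range M, (-1:ℝ)^m * genBinom al m * ((m:ℝ) * 1) * t1 (m-1)
      = -∑ m ∈ range M, (-1:ℝ)^m * genBinom al m * ((al - m) * 1) * t1 m :=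
    shift al t1 (fun _ => 1) M v_t1
  -- shift the t2 sum twice
  have s2a : ∑ m ∈ range M, (-1:ℝ)^m * genBinom al m * ((m:ℝ) * (((m:ℝ))-1) * 1) * t2 (m-2)
      = -∑ m ∈ range M, (-1:ℝ)^m * genBinom al m * ((al - m) * ((m:ℝ) * 1)) * t2 (m-1) := by
    have hs := shift al (fun j => t2 (j-1)) (fun j => ((j:ℝ)-1)) M (by simpa using v_t2')
    rw [show (∑ m ∈ range M, (-1:ℝ)^m * genBinom al m * ((m:ℝ) * (((m:ℝ))-1) * 1) * t2 (m-2))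
        = ∑ m ∈ range M, (-1:ℝ)^m * genBinom al m * ((m:ℝ) * ((m:ℝ)-1)) * t2 (m-1-1) from by
      apply Finset.sum_congr rfl; intro m _
      rw [show m-1-1 = m-2 from by omega]; ring]
    rw [hs]
    rw [neg_inj]
    apply Finset.sum_congr rfl
    intro m _
    push_cast
    ring
  have s2b : ∑ m ∈ range M, (-1:ℝ)^m * genBinom al m * ((al - m) * ((m:ℝ) * 1)) * t2 (m-1)
      = -∑ m ∈ range M, (-1:ℝ)^m * genBinom al m * ((al - m) * (al - ((m:ℝ)+1))) * t2 m := by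
    have hs := shift al t2 (fun j => al - (j:ℝ)) M v_t2
    rw [show (∑ m ∈ range M, (-1:ℝ)^m * genBinom al m * ((al - m) * ((m:ℝ) * 1)) * t2 (m-1))
        = ∑ m ∈ range M, (-1:ℝ)^m * genBinom al m * ((m:ℝ) * (al - (m:ℝ))) * t2 (m-1) from by
      apply Finset.sum_congr rfl; intro m _; ring]
    rw [hs, neg_inj]
    apply Finset.sum_congr rfl
    intro m _
    push_cast
    ring
  -- telescoping of the certificate sums
  have sL1 : ∑ m ∈ range M, (-1:ℝ)^m * genBinom al m * ((m:ℝ) * (m:ℝ)) * tL1 (m-1)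
      = -∑ m ∈ range M, (-1:ℝ)^m * genBinom al m * ((al - m) * ((m:ℝ)+1)) * tL1 m := by
    have hs := shift al tL1 (fun j => (j:ℝ)) M v_tL1
    rw [hs, neg_inj]
    apply Finset.sum_congr rfl
    intro m _
    push_cast
    ring
  have sL0 : ∑ m ∈ range M, (-1:ℝ)^m * genBinom al m * ((m:ℝ) * 1) * tL0 (m-1)
      = -∑ m ∈ range M, (-1:ℝ)^m * genBinom al m * ((al - m) * 1) * tL0 m :=
    shift al tL0 (fun _ => 1) M v_tL0
  -- the certificate sum is zero
  have hZ : ∑ m ∈ range M, (-1:ℝ)^m * genBinom al m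
        * ((al-(m:ℝ))*(al-(m:ℝ)-1) * t2 m - (al-(m:ℝ)) * t1 m - k*(2*k-1) * c1 m) = 0 := by
    have e1 : ∑ m ∈ range M, (-1:ℝ)^m * genBinom al m
          * ((al-(m:ℝ))*(al-(m:ℝ)-1) * t2 m - (al-(m:ℝ)) * t1 m - k*(2*k-1) * c1 m)
        = (-∑ m ∈ range M, (-1:ℝ)^m * genBinom al m * ((m:ℝ) * (m:ℝ)) * tL1 (m-1))
          + (-∑ m ∈ range M, (-1:ℝ)^m * genBinom al m * ((m:ℝ) * 1) * tL0 (m-1))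
          + (-∑ m ∈ range M, (-1:ℝ)^m * genBinom al m * ((al - m) * ((m:ℝ)+1)) * tL1 m)
          + (-∑ m ∈ range M, (-1:ℝ)^m * genBinom al m * ((al - m) * 1) * tL0 m) := by
      rw [← Finset.sum_neg_distrib, ← Finset.sum_neg_distrib, ← Finset.sum_neg_distrib,
        ← Finset.sum_neg_distrib, ← Finset.sum_add_distrib, ← Finset.sum_add_distrib,
        ← Finset.sum_add_distrib]
      apply Finset.sum_congr rfl
      intro m _
      have := hq m
      linear_combination (-1:ℝ)^m * genBinom al m * this
    rw [e1, sL1, sL0]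
    ring
  -- put everything together
  have final : ((r:ℝ)+1) * (k + r) * RR k (r+1) s
      = ((3*k-1)*((r:ℝ)+s) + ((r:ℝ)+s)^2 + k*(2*k-1))
          * (∑ m ∈ range M, genBinom al m * (-1:ℝ)^m * c1 m) := by
    rw [key2, s1, s2a, s2b]
    have expand : ∑ m ∈ range M, (-1:ℝ)^m * genBinom al m
          * ((al-(m:ℝ))*(al-(m:ℝ)-1) * t2 m - (al-(m:ℝ)) * t1 m - k*(2*k-1) * c1 m)
        = (-∑ m ∈ range M, (-1:ℝ)^m * genBinom al m * ((al - m) * 1) * t1 m)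
          + (∑ m ∈ range M, (-1:ℝ)^m * genBinom al m * ((al - m) * (al - ((m:ℝ)+1))) * t2 m)
          - k*(2*k-1) * (∑ m ∈ range M, genBinom al m * (-1:ℝ)^m * c1 m) := by
      rw [Finset.mul_sum, ← Finset.sum_neg_distrib, ← Finset.sum_add_distrib,
        ← Finset.sum_sub_distrib]
      apply Finset.sum_congr rfl
      intro m _
      ring
    linear_combination expand.symm + hZ
  rw [final, hRR0]
  ring



noncomputable def Lfun (k : ℝ) (r s : ℕ) : ℝ :=
  (∏ i ∈ range (r+s), (2*k-1+i)) / (∏ i ∈ range (r+s), (k+i))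
    * genBinom (k+((r+s:ℕ):ℝ)-1) r * genBinom (k+((r+s:ℕ):ℝ)-1) s


-- symmetry
lemma uPoly_swap : rename (Equiv.swap (0:Fin 2) 1) uPoly = uPoly := by
  unfold uPoly
  simp only [map_sub, map_add, map_mul, map_pow, map_ofNat, rename_X,
    Equiv.swap_apply_left, Equiv.swap_apply_right]
  ring

lemma cc_symm (m r s : ℕ) : coeff (sg r s) (uPoly^m) = coeff (sg s r) (uPoly^m) := by
  have h : rename (Equiv.swap (0:Fin 2) 1) (uPoly^m) = uPoly^m := by
    rw [map_pow, uPoly_swap]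
  have h2 : Finsupp.mapDomain (Equiv.swap (0:Fin 2) 1) (sg s r) = sg r s := by
    rw [sg, Finsupp.mapDomain_add, Finsupp.mapDomain_single, Finsupp.mapDomain_single,
      Equiv.swap_apply_left, Equiv.swap_apply_right, sg, add_comm]
  rw [← h2, ← h]
  rw [coeff_rename_mapDomain _ (Equiv.swap (0:Fin 2) 1).injective]
  rw [h]

lemma RR_symm (k : ℝ) (r s : ℕ) : RR k r s = RR k s r := by
  unfold RR
  rw [show s + r + 1 = r + s + 1 from by omega]
  apply Finset.sum_congr rfl
  intro m _
  rw [cc_symm]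

lemma Lfun_symm (k : ℝ) (r s : ℕ) : Lfun k r s = Lfun k s r := by
  unfold Lfun
  rw [show s + r = r + s from by omega]
  ring

lemma Lrec (k : ℝ) (hk1 : ∀ n : ℕ, k + n ≠ 0) (r s : ℕ) :
    ((r:ℝ)+1) * (k + r) * Lfun k (r+1) s
      = (2*k + ((r:ℝ)+s) - 1) * (k + ((r:ℝ)+s)) * Lfun k r s := by
  unfold Lfun
  rw [show r + 1 + s = (r+s) + 1 from by omega]
  rw [Finset.prod_range_succ, Finset.prod_range_succ]
  have hcast : (((r+s+1:ℕ)):ℝ) = ((r+s:ℕ):ℝ) + 1 := by push_cast; ring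
  rw [hcast]
  set N : ℝ := ((r+s:ℕ):ℝ) with hN
  have hNrs : N = (r:ℝ) + s := by rw [hN]; push_cast; ring
  have h1 : ((r:ℝ)+1) * genBinom (k + N) (r+1) = (k + N) * genBinom (k + N - 1) r := by
    have := genBinom_shift1 (k + N - 1) r
    rw [show k + N - 1 + 1 = k + N from by ring] at this
    exact this
  have h2 : (k + (r:ℝ)) * genBinom (k + N) s = (k + N) * genBinom (k + N - 1) s := by
    have := genBinom_shift2 (k + N - 1) s
    rw [show k + N - 1 + 1 = k + N from by ring] at this
    rw [show k + N - (s:ℝ) = k + r from by rw [hNrs]; ring] at this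
    exact this
  have hQ : (∏ i ∈ range (r+s), (k+(i:ℝ))) ≠ 0 := by
    apply Finset.prod_ne_zero_iff.mpr
    intro i _
    exact hk1 i
  have hkN : k + N ≠ 0 := by
    have := hk1 (r+s)
    rwa [hN]
  rw [show k + (N+1) - 1 = k + N from by ring]
  have hr1 : ((r:ℝ)+1) ≠ 0 := by positivity
  have hkr : k + (r:ℝ) ≠ 0 := hk1 r
  have hgA : genBinom (k + N) (r+1) = (k + N) * genBinom (k + N - 1) r / ((r:ℝ)+1) := by
    rw [eq_div_iff hr1]
    linarith [h1]
  have hgB : genBinom (k + N) s = (k + N) * genBinom (k + N - 1) s / (k + (r:ℝ)) := by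
    rw [eq_div_iff hkr]
    linarith [h2]
  rw [hgA, hgB, ← hNrs]
  field_simp
  ring

lemma LeqR (k : ℝ) (hk1 : ∀ n : ℕ, k + n ≠ 0) : ∀ r s : ℕ, Lfun k r s = RR k r s := by
  have base : Lfun k 0 0 = RR k 0 0 := by
    unfold Lfun RR genBinom
    simp [sg]
  have cancel : ∀ (r : ℕ) (x y : ℝ), ((r:ℝ)+1) * (k + r) * x = ((r:ℝ)+1) * (k + r) * y → x = y := by
    intro r x y h
    have h1 : ((r:ℝ)+1) * (k + r) ≠ 0 := mul_ne_zero (by positivity) (hk1 r)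
    exact mul_left_cancel₀ h1 h
  have axis : ∀ r : ℕ, Lfun k r 0 = RR k r 0 := by
    intro r
    induction r with
    | zero => exact base
    | succ n ih =>
      apply cancel n
      rw [Lrec k hk1 n 0, Rrec k n 0, ih]
  intro r s
  induction s generalizing r with
  | zero => exact axis r
  | succ n ih =>
    apply cancel n (Lfun k r (n+1)) (RR k r (n+1))
    rw [show Lfun k r (n+1) = Lfun k (n+1) r from Lfun_symm k r (n+1),
      show RR k r (n+1) = RR k (n+1) r from RR_symm k r (n+1),
      Lrec k hk1 n r, Rrec k n r, show Lfun k n r = RR k n r from by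
        rw [Lfun_symm k n r, RR_symm k n r]; exact ih r]

lemma Gamma_prod (z : ℝ) (hz : ∀ n : ℕ, z + n ≠ 0) :
    ∀ N : ℕ, Real.Gamma (z + N) = Real.Gamma z * ∏ i ∈ range N, (z + i) := by
  intro N
  induction N with
  | zero => simp
  | succ n ih =>
    have h1 : z + ((n+1:ℕ):ℝ) = (z + n) + 1 := by push_cast; ring
    rw [h1, Real.Gamma_add_one (hz n), ih, Finset.prod_range_succ]
    ring


/-- Cohen's generating function: as formal power series in `x` and `y`, for `2k-1` not a
nonpositive integer,
`∑_N (Γ(2k+N-1)/Γ(k+N)) ∑_{r+s=N} C(k+N-1,r) C(k+N-1,s) x^r y^s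
  = (Γ(2k-1)/Γ(k)) (1 - 2(x+y) + (x-y)²)^{1/2-k}`,
stated coefficientwise: the right-hand side is expanded by the binomial series
`(1-u)^{1/2-k} = ∑_m C(1/2-k,m) (-u)^m` with `u = 2(x+y) - (x-y)²`; since `u` has no constant
term, the coefficient of `x^r y^s` only involves `m ≤ r+s`. -/

theorem cohen_generating_function (k : ℝ) (hk : ∀ m : ℕ, 2 * k - 1 ≠ -(m : ℝ)) (r s : ℕ) :
    Real.Gamma (2 * k + (r + s : ℕ) - 1) / Real.Gamma (k + (r + s : ℕ)) *
        genBinom (k + (r + s : ℕ) - 1) r * genBinom (k + (r + s : ℕ) - 1) s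
      = Real.Gamma (2 * k - 1) / Real.Gamma k *
          ∑ m ∈ Finset.range (r + s + 1),
            genBinom (1 / 2 - k) m * (-1 : ℝ) ^ m *
              MvPolynomial.coeff (Finsupp.single 0 r + Finsupp.single 1 s) (uPoly ^ m) := by
  have hk1 : ∀ n : ℕ, k + n ≠ 0 := by
    intro n h
    apply hk (2*n+1)
    push_cast
    linarith
  have hk2 : ∀ n : ℕ, (2*k-1) + n ≠ 0 := by
    intro n h
    apply hk n
    linarith
  have hsum : (∑ m ∈ Finset.range (r + s + 1),
      genBinom (1 / 2 - k) m * (-1 : ℝ) ^ m *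
        MvPolynomial.coeff (Finsupp.single 0 r + Finsupp.single 1 s) (uPoly ^ m)) = RR k r s := rfl
  rw [hsum, ← LeqR k hk1 r s]
  have hG1 : Real.Gamma (2 * k + ((r+s:ℕ):ℝ) - 1)
      = Real.Gamma (2*k-1) * ∏ i ∈ range (r+s), (2*k-1+i) := by
    rw [show 2*k + ((r+s:ℕ):ℝ) - 1 = (2*k-1) + ((r+s:ℕ):ℝ) from by ring]
    exact Gamma_prod (2*k-1) hk2 (r+s)
  have hG2 : Real.Gamma (k + ((r+s:ℕ):ℝ)) = Real.Gamma k * ∏ i ∈ range (r+s), (k+i) :=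
    Gamma_prod k hk1 (r+s)
  rw [hG1, hG2]
  unfold Lfun
  have hQ : (∏ i ∈ range (r+s), (k+(i:ℝ))) ≠ 0 :=
    Finset.prod_ne_zero_iff.mpr (fun i _ => hk1 i)
  have hGk : Real.Gamma k ≠ 0 := by
    apply Real.Gamma_ne_zero
    intro m h
    apply hk1 m
    rw [h]
    ring
  field_simp
end

section
/- For the formal power series identity underlying Lemma 3.2: if F(z,w) = ∑_{α,j} (c(α,j)/(α!j!)) z^α w^j is analytic near 0 in ℂ^{ℓ−1}×ℂ, Q is the quadratic form on ℂ^{ℓ−1} with Gram matrix S_L, m > 0, and the slash F|_k J_v(z,w) := (Q(z) − m w²)^{−k} F(R_v z/(Q(z)−mw²), w/(Q(z)−mw²)) for v with Q(v)=1, then ∂_w^n|_{w=0}(F|_k J_v) = ∑_{i=0}^{⌊n/2⌋} (n!/(i!(n−2i)!))·m^i·((E_z + k + n − 2i)^{(i)} ∂_w^{n−2i}|_{w=0}F)|_{k+n−i} J_v, where (E_z+a)^{(i)} = (E_z+a)(E_z+a+1)···(E_z+a+i−1) and E_z is the Euler operator in z. -/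
open Matrix Finset

/-- The rising Euler operator `(E_z+a)^{(i)} = (E_z+a)(E_z+a+1)⋯(E_z+a+i-1)` (composition of
operators), where `E_z f z = ∑ j z_j ∂_j f(z)` is the Euler operator, defined on functions
via Fréchet partial derivatives. -/
noncomputable def risingEulerFun (d : ℕ) (a : ℂ) :
    ℕ → ((Fin d → ℂ) → ℂ) → ((Fin d → ℂ) → ℂ)
  | 0, f => f
  | i + 1, f => fun z =>
      (∑ j, z j * fderiv ℂ (risingEulerFun d (a + 1) i f) z (Pi.single j 1)) +
        a * risingEulerFun d (a + 1) i f z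

noncomputable section HPILAux
open Topology



variable {d : ℕ}

/-- Uncurried version of a two-argument function. -/
def UC (F : (Fin d → ℂ) → ℂ → ℂ) : (Fin d → ℂ) × ℂ → ℂ := fun q => F q.1 q.2

/-- Joint analyticity. -/
def JA (F : (Fin d → ℂ) → ℂ → ℂ) : Prop := ∀ p : (Fin d → ℂ) × ℂ, AnalyticAt ℂ (UC F) p

/-- Partial derivative in the second variable, as a curried function. -/
def Fw (F : (Fin d → ℂ) → ℂ → ℂ) : (Fin d → ℂ) → ℂ → ℂ :=
  fun z w => fderiv ℂ (UC F) (z, w) (0, 1)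

/-- `(E+k)F` where `E` is the full Euler operator in `(z,w)`. -/
def FE (k : ℂ) (F : (Fin d → ℂ) → ℂ → ℂ) : (Fin d → ℂ) → ℂ → ℂ :=
  fun z w => fderiv ℂ (UC F) (z, w) (z, w) + k * F z w

/-- `j`-th Taylor coefficient function (times `j!`) in `w` at `0`. -/
def Gj (j : ℕ) (F : (Fin d → ℂ) → ℂ → ℂ) : (Fin d → ℂ) → ℂ :=
  fun z => iteratedDeriv j (F z) 0

lemma hasDerivAt_curry_right {F : (Fin d → ℂ) → ℂ → ℂ} (hF : JA F) (z : Fin d → ℂ) (w : ℂ) :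
    HasDerivAt (F z) (Fw F z w) w := by
  have h1 : HasDerivAt (fun w : ℂ => ((z, w) : (Fin d → ℂ) × ℂ)) (0, 1) w :=
    HasDerivAt.prodMk (hasDerivAt_const w z) (hasDerivAt_id w)
  have h2 := ((hF (z, w)).differentiableAt.hasFDerivAt).comp_hasDerivAt w h1
  exact h2

lemma deriv_curry_right {F : (Fin d → ℂ) → ℂ → ℂ} (hF : JA F) (z : Fin d → ℂ) :
    deriv (F z) = Fw F z := funext fun w => (hasDerivAt_curry_right hF z w).deriv

lemma fderiv_curry_left {F : (Fin d → ℂ) → ℂ → ℂ} (hF : JA F) (z : Fin d → ℂ) (w : ℂ)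
    (u : Fin d → ℂ) :
    fderiv ℂ (fun z' => F z' w) z u = fderiv ℂ (UC F) (z, w) (u, 0) := by
  have h1 : HasFDerivAt (fun z' : Fin d → ℂ => ((z', w) : (Fin d → ℂ) × ℂ))
      ((ContinuousLinearMap.id ℂ (Fin d → ℂ)).prod 0) z :=
    HasFDerivAt.prodMk (hasFDerivAt_id z) (hasFDerivAt_const w z)
  have h2 := ((hF (z, w)).differentiableAt.hasFDerivAt).comp z h1
  have h3 : fderiv ℂ (fun z' => F z' w) z =
      (fderiv ℂ (UC F) (z, w)).comp ((ContinuousLinearMap.id ℂ (Fin d → ℂ)).prod 0) := h2.fderiv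
  rw [h3]; rfl

lemma ja_fw {F : (Fin d → ℂ) → ℂ → ℂ} (hF : JA F) : JA (Fw F) := by
  intro p
  have h1 : AnalyticAt ℂ (fderiv ℂ (UC F)) p := (hF p).fderiv
  have h2 := ((ContinuousLinearMap.apply ℂ ℂ (((0 : Fin d → ℂ), (1 : ℂ)) :
      (Fin d → ℂ) × ℂ)).analyticAt (fderiv ℂ (UC F) p)).comp h1
  exact h2

lemma ja_fe {F : (Fin d → ℂ) → ℂ → ℂ} (hF : JA F) (k : ℂ) : JA (FE k F) := by
  intro p
  have h1 : AnalyticAt ℂ (fun q : (Fin d → ℂ) × ℂ => fderiv ℂ (UC F) q q) p := by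
    have hb := (ContinuousLinearMap.apply ℂ ℂ (E := (Fin d → ℂ) × ℂ)).flip.analyticAt_bilinear
      (fderiv ℂ (UC F) p, p)
    exact hb.comp₂ (hF p).fderiv analyticAt_id
  exact h1.add (analyticAt_const.mul (hF p))

lemma fderiv_eq_sum_single {f : (Fin d → ℂ) → ℂ} {z : Fin d → ℂ}
    (h : DifferentiableAt ℂ f z) (u : Fin d → ℂ) :
    fderiv ℂ f z u = ∑ j, u j * fderiv ℂ f z (Pi.single j 1) := by
  have hu : ∑ j, u j • (Pi.single j 1 : Fin d → ℂ) = u := by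
    conv_rhs => rw [← Finset.univ_sum_single u]
    refine Finset.sum_congr rfl fun j _ => ?_
    rw [← Pi.single_smul, smul_eq_mul, mul_one]
  conv_lhs => rw [← hu]
  rw [map_sum]
  simp [smul_eq_mul]


def EOp (a : ℂ) (g : (Fin d → ℂ) → ℂ) : (Fin d → ℂ) → ℂ :=
  fun z => (∑ j, z j * fderiv ℂ g z (Pi.single j 1)) + a * g z

lemma rEF_succ (a : ℂ) (i : ℕ) (f : (Fin d → ℂ) → ℂ) :
    risingEulerFun d a (i + 1) f = EOp a (risingEulerFun d (a + 1) i f) := rfl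

lemma rEF_zero (a : ℂ) (f : (Fin d → ℂ) → ℂ) : risingEulerFun d a 0 f = f := rfl

lemma an_EOp {g : (Fin d → ℂ) → ℂ} (hg : AnalyticOnNhd ℂ g Set.univ) (a : ℂ) :
    AnalyticOnNhd ℂ (EOp a g) Set.univ := by
  intro z _
  refine AnalyticAt.add ?_ (analyticAt_const.mul (hg z trivial))
  refine Finset.analyticAt_fun_sum _ fun j _ => ?_
  have h2 : AnalyticAt ℂ (fun z => fderiv ℂ g z (Pi.single j (1 : ℂ))) z := by
    have h := ((ContinuousLinearMap.apply ℂ ℂ (Pi.single j (1 : ℂ))).analyticAt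
      (fderiv ℂ g z)).comp (hg z trivial).fderiv
    simpa [Function.comp_def] using h
  exact ((ContinuousLinearMap.proj (R := ℂ) (φ := fun _ : Fin d => ℂ) j).analyticAt z).mul h2

lemma an_RE {g : (Fin d → ℂ) → ℂ} (hg : AnalyticOnNhd ℂ g Set.univ) (i : ℕ) (a : ℂ) :
    AnalyticOnNhd ℂ (risingEulerFun d a i g) Set.univ := by
  induction i generalizing a with
  | zero => exact hg
  | succ i ih => rw [rEF_succ]; exact an_EOp (ih _) a

lemma EOp_apply_eq {g : (Fin d → ℂ) → ℂ} (c : ℂ) :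
    EOp c g = fun z => EOp (0 : ℂ) g z + c * g z := by
  funext z; simp only [EOp]; ring

lemma fderiv_EOp {g : (Fin d → ℂ) → ℂ} (hg : AnalyticOnNhd ℂ g Set.univ) (c : ℂ)
    (z v : Fin d → ℂ) :
    fderiv ℂ (EOp c g) z v = fderiv ℂ (EOp (0 : ℂ) g) z v + c * fderiv ℂ g z v := by
  rw [EOp_apply_eq (g := g) c]
  have h1 : DifferentiableAt ℂ (EOp (0 : ℂ) g) z := ((an_EOp hg 0) z trivial).differentiableAt
  have h2 : DifferentiableAt ℂ g z := (hg z trivial).differentiableAt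
  have : fderiv ℂ (fun z => EOp (0 : ℂ) g z + c * g z) z
      = fderiv ℂ (EOp (0 : ℂ) g) z + c • fderiv ℂ g z := by
    rw [fderiv_fun_add h1 (h2.const_mul c), fderiv_const_mul h2 c]
  rw [this]; simp

lemma EOp_comm {g : (Fin d → ℂ) → ℂ} (hg : AnalyticOnNhd ℂ g Set.univ) (a b : ℂ) :
    EOp b (EOp a g) = EOp a (EOp b g) := by
  funext z
  have expand : ∀ c : ℂ,
      ∑ j, z j * fderiv ℂ (EOp c g) z (Pi.single j 1)
        = ∑ j, z j * fderiv ℂ (EOp (0 : ℂ) g) z (Pi.single j 1)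
          + c * ∑ j, z j * fderiv ℂ g z (Pi.single j 1) := by
    intro c
    rw [Finset.mul_sum, ← Finset.sum_add_distrib]
    refine Finset.sum_congr rfl fun j _ => ?_
    rw [fderiv_EOp hg c]; ring
  simp only [EOp] at *
  rw [expand a, expand b]
  ring

lemma RE_EOp_comm {d : ℕ} {g : (Fin d → ℂ) → ℂ} (hg : AnalyticOnNhd ℂ g Set.univ) (a : ℂ)
    (i : ℕ) : ∀ b : ℂ, risingEulerFun d b i (EOp a g) = EOp a (risingEulerFun d b i g) := by
  induction i with
  | zero => intro b; rfl
  | succ i ih =>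
    intro b
    rw [rEF_succ, rEF_succ, ih (b + 1), EOp_comm (an_RE hg i (b + 1)) a b]

lemma UC_Fw {d : ℕ} (F : (Fin d → ℂ) → ℂ → ℂ) :
    UC (Fw F) = fun q => fderiv ℂ (UC F) q ((0 : Fin d → ℂ), (1 : ℂ)) :=
  funext fun q => by simp [UC, Fw]

lemma C1 {d : ℕ} {F : (Fin d → ℂ) → ℂ → ℂ} (hF : JA F) (z : Fin d → ℂ) (w0 : ℂ)
    (u : Fin d → ℂ) :
    deriv (fun w => fderiv ℂ (UC F) (z, w) ((u, 0) : (Fin d → ℂ) × ℂ)) w0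
      = fderiv ℂ (UC (Fw F)) (z, w0) ((u, 0) : (Fin d → ℂ) × ℂ) := by
  set G := UC F with hG
  have hd2 : DifferentiableAt ℂ (fderiv ℂ G) (z, w0) := (hF (z, w0)).fderiv.differentiableAt
  set D2 := fderiv ℂ (fderiv ℂ G) (z, w0) with hD2
  have happly : ∀ v : (Fin d → ℂ) × ℂ,
      HasFDerivAt (fun q => fderiv ℂ G q v)
        ((ContinuousLinearMap.apply ℂ ℂ v).comp D2) (z, w0) := fun v =>
    (ContinuousLinearMap.apply ℂ ℂ v).hasFDerivAt.comp (z, w0) hd2.hasFDerivAt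
  have hcurve : HasDerivAt (fun w : ℂ => ((z, w) : (Fin d → ℂ) × ℂ)) (0, 1) w0 :=
    HasDerivAt.prodMk (hasDerivAt_const w0 z) (hasDerivAt_id w0)
  have hL : deriv (fun w => fderiv ℂ G (z, w) ((u, 0) : (Fin d → ℂ) × ℂ)) w0
      = D2 ((0 : Fin d → ℂ), (1 : ℂ)) ((u, 0) : (Fin d → ℂ) × ℂ) := by
    have := ((happly (u, 0)).comp_hasDerivAt w0 hcurve).deriv
    simpa [Function.comp_def] using this
  have hR : fderiv ℂ (UC (Fw F)) (z, w0) ((u, 0) : (Fin d → ℂ) × ℂ)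
      = D2 ((u, 0) : (Fin d → ℂ) × ℂ) ((0 : Fin d → ℂ), (1 : ℂ)) := by
    rw [UC_Fw]
    rw [(happly (((0 : Fin d → ℂ), (1 : ℂ)))).fderiv]
    rfl
  rw [hL, hR]
  exact second_derivative_symmetric (fun y => (hF y).differentiableAt.hasFDerivAt)
    hd2.hasFDerivAt _ _

lemma Gj_zero {d : ℕ} (F : (Fin d → ℂ) → ℂ → ℂ) : Gj 0 F = fun z => F z 0 := by
  funext z; simp [Gj]

lemma Gj_succ {d : ℕ} {F : (Fin d → ℂ) → ℂ → ℂ} (hF : JA F) (j : ℕ) :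
    Gj (j + 1) F = Gj j (Fw F) := by
  funext z
  rw [Gj, Gj, iteratedDeriv_succ', deriv_curry_right hF z]

lemma an_Gj {d : ℕ} {F : (Fin d → ℂ) → ℂ → ℂ} (hF : JA F) (j : ℕ) :
    AnalyticOnNhd ℂ (Gj j F) Set.univ := by
  induction j generalizing F with
  | zero =>
    rw [Gj_zero]
    intro z _
    exact (hF (z, 0)).comp₂ analyticAt_id analyticAt_const
  | succ j ih =>
    rw [Gj_succ hF]
    exact ih (ja_fw hF)

lemma X1 {d : ℕ} {F : (Fin d → ℂ) → ℂ → ℂ} (hF : JA F) (j : ℕ) (z u : Fin d → ℂ) :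
    iteratedDeriv j (fun w => fderiv ℂ (UC F) (z, w) ((u, 0) : (Fin d → ℂ) × ℂ)) 0
      = fderiv ℂ (Gj j F) z u := by
  induction j generalizing F with
  | zero =>
    rw [iteratedDeriv_zero, Gj_zero]
    exact (fderiv_curry_left hF z 0 u).symm
  | succ j ih =>
    rw [iteratedDeriv_succ']
    have : deriv (fun w => fderiv ℂ (UC F) (z, w) ((u, 0) : (Fin d → ℂ) × ℂ))
        = fun w => fderiv ℂ (UC (Fw F)) (z, w) ((u, 0) : (Fin d → ℂ) × ℂ) :=
      funext fun w => C1 hF z w u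
    rw [this, ih (ja_fw hF), ← Gj_succ hF]

lemma an_deriv {f : ℂ → ℂ} {x : ℂ} (hf : AnalyticAt ℂ f x) : AnalyticAt ℂ (deriv f) x := by
  have h2 : AnalyticAt ℂ (fun y => fderiv ℂ f y 1) x := by
    simpa [Function.comp_def] using
      ((ContinuousLinearMap.apply ℂ ℂ (1 : ℂ)).analyticAt (fderiv ℂ f x)).comp hf.fderiv
  have h3 : deriv f = fun y => fderiv ℂ f y 1 := funext fun y => (fderiv_apply_one_eq_deriv).symm
  rw [h3]; exact h2

lemma an_zpow {f : ℂ → ℂ} {x : ℂ} (hf : AnalyticAt ℂ f x) (h0 : f x ≠ 0) (m : ℤ) :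
    AnalyticAt ℂ (fun w => f w ^ m) x := by
  cases m with
  | ofNat n => have h : AnalyticAt ℂ (fun w => f w ^ n) x := hf.pow n; simpa using h
  | negSucc n =>
    have := (hf.pow (n + 1)).inv (pow_ne_zero _ h0)
    have h : AnalyticAt ℂ (fun w => (f w ^ (n + 1))⁻¹) x := this
    simpa [zpow_negSucc] using h

lemma itdw_open {f : ℂ → ℂ} {s : Set ℂ} {x : ℂ} (hs : IsOpen s) (hx : x ∈ s) (n : ℕ) :
    iteratedDerivWithin n f s x = iteratedDeriv n f x := by
  rw [iteratedDerivWithin, iteratedDeriv, iteratedFDerivWithin_of_isOpen n hs hx]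

lemma itd_add {f g : ℂ → ℂ} (hf : AnalyticAt ℂ f 0) (hg : AnalyticAt ℂ g 0) (n : ℕ) :
    iteratedDeriv n (fun w => f w + g w) 0 = iteratedDeriv n f 0 + iteratedDeriv n g 0 := by
  set s := {y : ℂ | AnalyticAt ℂ f y ∧ AnalyticAt ℂ g y} with hsdef
  have hs : IsOpen s := by
    rw [isOpen_iff_mem_nhds]
    intro y hy
    exact hy.1.eventually_analyticAt.and hy.2.eventually_analyticAt
  have h0 : (0 : ℂ) ∈ s := ⟨hf, hg⟩
  have hfc : ContDiffOn ℂ n f s := fun y hy => hy.1.contDiffAt.contDiffWithinAt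
  have hgc : ContDiffOn ℂ n g s := fun y hy => hy.2.contDiffAt.contDiffWithinAt
  have := iteratedDerivWithin_add h0 hs.uniqueDiffOn (hfc 0 h0) (hgc 0 h0)
  rwa [itdw_open hs h0, itdw_open hs h0, itdw_open hs h0] at this

lemma itd_cmul {f : ℂ → ℂ} (hf : AnalyticAt ℂ f 0) (c : ℂ) (n : ℕ) :
    iteratedDeriv n (fun w => c * f w) 0 = c * iteratedDeriv n f 0 := by
  set s := {y : ℂ | AnalyticAt ℂ f y} with hsdef
  have hs : IsOpen s := by
    rw [isOpen_iff_mem_nhds]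
    intro y hy
    exact hy.eventually_analyticAt
  have h0 : (0 : ℂ) ∈ s := hf
  have hfc : ContDiffOn ℂ n f s := fun y hy => hy.contDiffAt.contDiffWithinAt
  have := iteratedDerivWithin_const_mul h0 hs.uniqueDiffOn c (hfc 0 h0)
  rwa [itdw_open hs h0, itdw_open hs h0] at this

lemma itd_id_mul {f : ℂ → ℂ} (hf : AnalyticAt ℂ f 0) (n : ℕ) :
    iteratedDeriv (n + 1) (fun w => w * f w) 0 = (n + 1) * iteratedDeriv n f 0 := by
  induction n generalizing f with
  | zero =>
    rw [iteratedDeriv_one]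
    have := (hasDerivAt_id' (x := (0 : ℂ))).mul hf.differentiableAt.hasDerivAt
    rw [show (fun w => w * f w) = (fun x => x) * f from rfl]
    simpa using this.deriv
  | succ n ih =>
    have hdf : AnalyticAt ℂ (deriv f) 0 := an_deriv hf
    have hev : deriv (fun w => w * f w) =ᶠ[𝓝 (0 : ℂ)] fun y => f y + y * deriv f y := by
      filter_upwards [hf.eventually_analyticAt] with y hy
      have := (hasDerivAt_id' (x := y)).mul hy.differentiableAt.hasDerivAt
      rw [show (fun w => w * f w) = (fun x => x) * f from rfl]
      simpa using this.deriv
    have hg2 : AnalyticAt ℂ (fun w : ℂ => w * deriv f w) 0 := analyticAt_id.mul hdf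
    rw [iteratedDeriv_succ', Filter.EventuallyEq.iteratedDeriv_eq _ hev,
      itd_add hf hg2 (n + 1), ih hdf, ← iteratedDeriv_succ']
    push_cast; ring

lemma Gj_FE {d : ℕ} {F : (Fin d → ℂ) → ℂ → ℂ} (hF : JA F) (k : ℂ) (j : ℕ) :
    Gj j (FE k F) = EOp (k + j) (Gj j F) := by
  funext z'
  have hsplit : (FE k F z') = fun w =>
      fderiv ℂ (UC F) (z', w) (((z', 0) : (Fin d → ℂ) × ℂ))
        + (w * Fw F z' w + k * F z' w) := by
    funext w
    show fderiv ℂ (UC F) (z', w) (z', w) + k * F z' w = _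
    have h1 : ((z', w) : (Fin d → ℂ) × ℂ)
        = ((z', 0) : (Fin d → ℂ) × ℂ) + w • (((0 : Fin d → ℂ), (1 : ℂ))) := by
      simp [Prod.ext_iff]
    calc fderiv ℂ (UC F) (z', w) (z', w) + k * F z' w
        = fderiv ℂ (UC F) (z', w) (((z', 0) : (Fin d → ℂ) × ℂ) + w • ((0 : Fin d → ℂ), (1 : ℂ)))
            + k * F z' w := by rw [← h1]
      _ = fderiv ℂ (UC F) (z', w) ((z', 0)) + w * Fw F z' w + k * F z' w := by
            rw [map_add, (fderiv ℂ (UC F) (z', w)).map_smul, smul_eq_mul]; rfl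
      _ = _ := by ring
  have a1 : AnalyticAt ℂ (fun w : ℂ => fderiv ℂ (UC F) (z', w) ((z', 0) :
      (Fin d → ℂ) × ℂ)) 0 := by
    have houter : AnalyticAt ℂ
        (fun q : (Fin d → ℂ) × ℂ => fderiv ℂ (UC F) q (((z', 0)) : (Fin d → ℂ) × ℂ)) (z', 0) := by
      simpa [Function.comp_def] using
        ((ContinuousLinearMap.apply ℂ ℂ (((z', 0)) : (Fin d → ℂ) × ℂ)).analyticAt
          (fderiv ℂ (UC F) (z', 0))).comp (hF (z', 0)).fderiv
    exact houter.comp₂ analyticAt_const analyticAt_id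
  have a2 : AnalyticAt ℂ (fun w : ℂ => Fw F z' w) 0 :=
    (ja_fw hF (z', 0)).comp₂ analyticAt_const analyticAt_id
  have a3 : AnalyticAt ℂ (fun w : ℂ => F z' w) 0 :=
    (hF (z', 0)).comp₂ analyticAt_const analyticAt_id
  have a2' : AnalyticAt ℂ (fun w : ℂ => w * Fw F z' w) 0 := analyticAt_id.mul a2
  have a3' : AnalyticAt ℂ (fun w : ℂ => k * F z' w) 0 := analyticAt_const.mul a3
  have a4 : AnalyticAt ℂ (fun w : ℂ => w * Fw F z' w + k * F z' w) 0 := a2'.add a3'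
  have hstep2 : iteratedDeriv j (fun w : ℂ => w * Fw F z' w) 0 = j * Gj j F z' := by
    cases j with
    | zero => simp [Gj]
    | succ j' =>
      have e : iteratedDeriv (j' + 1) (fun w : ℂ => w * Fw F z' w) 0
          = ((j' : ℂ) + 1) * iteratedDeriv j' (Fw F z') 0 := itd_id_mul a2 j'
      have e2 : iteratedDeriv j' (Fw F z') 0 = Gj (j' + 1) F z' := by
        rw [Gj_succ hF]; rfl
      rw [e, e2]
      push_cast; ring
  have e1 : iteratedDeriv j (fun w : ℂ =>
        fderiv ℂ (UC F) (z', w) ((z', 0) : (Fin d → ℂ) × ℂ)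
          + (w * Fw F z' w + k * F z' w)) 0
      = iteratedDeriv j (fun w : ℂ =>
          fderiv ℂ (UC F) (z', w) ((z', 0) : (Fin d → ℂ) × ℂ)) 0
        + iteratedDeriv j (fun w : ℂ => w * Fw F z' w + k * F z' w) 0 := itd_add a1 a4 j
  have e2 : iteratedDeriv j (fun w : ℂ => w * Fw F z' w + k * F z' w) 0
      = iteratedDeriv j (fun w : ℂ => w * Fw F z' w) 0
        + iteratedDeriv j (fun w : ℂ => k * F z' w) 0 := itd_add a2' a3' j
  have e3 : iteratedDeriv j (fun w : ℂ => k * F z' w) 0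
      = k * iteratedDeriv j (fun w : ℂ => F z' w) 0 := itd_cmul a3 k j
  calc Gj j (FE k F) z'
      = iteratedDeriv j (fun w : ℂ =>
          fderiv ℂ (UC F) (z', w) ((z', 0) : (Fin d → ℂ) × ℂ)
            + (w * Fw F z' w + k * F z' w)) 0 := by rw [Gj, hsplit]
    _ = fderiv ℂ (Gj j F) z' z' + (j * Gj j F z' + k * Gj j F z') := by
        rw [e1, e2, e3, X1 hF j z' z', hstep2]
        rfl
    _ = EOp (k + j) (Gj j F) z' := by
        rw [EOp, ← fderiv_eq_sum_single ((an_Gj hF j) z' trivial).differentiableAt z']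
        ring

def SL {d : ℕ} (t0 μ : ℂ) (x : Fin d → ℂ) (k : ℤ) (F : (Fin d → ℂ) → ℂ → ℂ) : ℂ → ℂ :=
  fun w => (t0 - μ * w ^ 2) ^ (-k : ℤ) * F ((t0 - μ * w ^ 2)⁻¹ • x) ((t0 - μ * w ^ 2)⁻¹ * w)

lemma an_A {t0 μ : ℂ} (w0 : ℂ) : AnalyticAt ℂ (fun w : ℂ => t0 - μ * w ^ 2) w0 :=
  analyticAt_const.sub (analyticAt_const.mul (analyticAt_id.pow 2))

lemma an_SL {d : ℕ} {t0 μ : ℂ} {x : Fin d → ℂ} {k : ℤ} {F : (Fin d → ℂ) → ℂ → ℂ}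
    (hF : JA F) (w0 : ℂ) (hA : t0 - μ * w0 ^ 2 ≠ 0) :
    AnalyticAt ℂ (SL t0 μ x k F) w0 := by
  have hAa : AnalyticAt ℂ (fun w : ℂ => t0 - μ * w ^ 2) w0 := an_A w0
  have hAinv : AnalyticAt ℂ (fun w : ℂ => (t0 - μ * w ^ 2)⁻¹) w0 := hAa.inv hA
  have h1 : AnalyticAt ℂ (fun w : ℂ => (t0 - μ * w ^ 2) ^ (-k : ℤ)) w0 := an_zpow hAa hA _
  have h2 : AnalyticAt ℂ (fun w : ℂ =>
      F ((t0 - μ * w ^ 2)⁻¹ • x) ((t0 - μ * w ^ 2)⁻¹ * w)) w0 :=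
    (hF _).comp₂ (hAinv.smul analyticAt_const) (hAinv.mul analyticAt_id)
  exact h1.mul h2

lemma MC {d : ℕ} (t0 μ : ℂ) (x : Fin d → ℂ) (k : ℤ) {F : (Fin d → ℂ) → ℂ → ℂ}
    (hF : JA F) (w : ℂ) (hA : t0 - μ * w ^ 2 ≠ 0) :
    HasDerivAt (SL t0 μ x k F)
      (SL t0 μ x (k + 1) (Fw F) w
        + w * (2 * μ * SL t0 μ x (k + 1) (FE (k : ℂ) F) w)) w := by
  have hA' : HasDerivAt (fun w : ℂ => t0 - μ * w ^ 2) (-(μ * (2 * w))) w := by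
    have h := ((hasDerivAt_pow 2 w).const_mul μ).const_sub t0
    simpa using h
  set Aw := t0 - μ * w ^ 2 with hAwdef
  have h1 : HasDerivAt (fun w : ℂ => (t0 - μ * w ^ 2) ^ (-k : ℤ))
      (((-k : ℤ) : ℂ) * Aw ^ ((-k : ℤ) - 1) * (-(μ * (2 * w)))) w := by
    have hz := hasDerivAt_zpow (-k) Aw (Or.inl hA)
    exact hz.comp w hA'
  have hinv : HasDerivAt (fun w : ℂ => (t0 - μ * w ^ 2)⁻¹)
      (-(-(μ * (2 * w))) / Aw ^ 2) w := hA'.inv hA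
  set D : ℂ := -(-(μ * (2 * w))) / Aw ^ 2 with hDdef
  have hc1 : HasDerivAt (fun w : ℂ => (t0 - μ * w ^ 2)⁻¹ • x) (D • x) w := hinv.smul_const x
  have hc2 : HasDerivAt (fun w : ℂ => (t0 - μ * w ^ 2)⁻¹ * w)
      (D * w + Aw⁻¹ * 1) w := hinv.mul (hasDerivAt_id' (x := w))
  have hγ : HasDerivAt (fun w : ℂ =>
      (((t0 - μ * w ^ 2)⁻¹ • x, (t0 - μ * w ^ 2)⁻¹ * w) : (Fin d → ℂ) × ℂ))
      ((D • x, D * w + Aw⁻¹ * 1)) w := HasDerivAt.prodMk hc1 hc2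
  set p : (Fin d → ℂ) × ℂ := (Aw⁻¹ • x, Aw⁻¹ * w) with hp
  set L := fderiv ℂ (UC F) p with hL
  have hcomp : HasDerivAt (fun w : ℂ =>
      F ((t0 - μ * w ^ 2)⁻¹ • x) ((t0 - μ * w ^ 2)⁻¹ * w))
      (L ((D • x, D * w + Aw⁻¹ * 1))) w :=
    by have h := ((hF p).differentiableAt.hasFDerivAt).comp_hasDerivAt w hγ; exact h
  have hprod := h1.mul hcomp
  have hfn : SL t0 μ x k F = fun w : ℂ => (t0 - μ * w ^ 2) ^ (-k : ℤ) *
      F ((t0 - μ * w ^ 2)⁻¹ • x) ((t0 - μ * w ^ 2)⁻¹ * w) := rfl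
  rw [hfn]
  refine HasDerivAt.congr_deriv hprod ?_; symm
  -- now prove the value identity
  have hvec : ((D • x, D * w + Aw⁻¹ * 1) : (Fin d → ℂ) × ℂ)
      = D • (((x, w)) : (Fin d → ℂ) × ℂ) + Aw⁻¹ • (((0 : Fin d → ℂ), (1 : ℂ))) := by
    simp [Prod.ext_iff, smul_eq_mul]
  have hxw : (((x, w)) : (Fin d → ℂ) × ℂ) = Aw • p := by
    rw [hp, Prod.smul_mk]
    congr 1
    · rw [smul_smul, mul_inv_cancel₀ hA, one_smul]
    · rw [smul_eq_mul, ← mul_assoc, mul_inv_cancel₀ hA, one_mul]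
  have hLval : L ((D • x, D * w + Aw⁻¹ * 1)) = D * (Aw * L p) + Aw⁻¹ * L ((0 : Fin d → ℂ), 1) := by
    rw [hvec, map_add, L.map_smul, L.map_smul, hxw, L.map_smul]
    simp only [smul_eq_mul]
    try ring
  have hSL1 : SL t0 μ x (k + 1) (Fw F) w = Aw ^ (-(k + 1) : ℤ) * L ((0 : Fin d → ℂ), 1) := rfl
  have hSL2 : SL t0 μ x (k + 1) (FE (k : ℂ) F) w
      = Aw ^ (-(k + 1) : ℤ) * (L p + (k : ℂ) * F p.1 p.2) := rfl
  rw [hSL1, hSL2, hLval]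
  have hz1 : Aw ^ ((-k : ℤ) - 1) = Aw ^ (-k : ℤ) * Aw⁻¹ := zpow_sub_one₀ hA _
  have hz2 : Aw ^ (-(k + 1) : ℤ) = Aw ^ (-k : ℤ) * Aw⁻¹ := by
    rw [show (-(k + 1) : ℤ) = (-k : ℤ) - 1 by ring, zpow_sub_one₀ hA]
  have hD2 : D = μ * (2 * w) * (Aw⁻¹ * Aw⁻¹) := by
    rw [hDdef, neg_neg, div_eq_mul_inv, sq, mul_inv]
  have hUCF : F ((t0 - μ * w ^ 2)⁻¹ • x) ((t0 - μ * w ^ 2)⁻¹ * w) = F p.1 p.2 := rfl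
  have hAA : Aw⁻¹ * Aw = 1 := inv_mul_cancel₀ hA
  rw [hz1, hz2, hD2, hUCF]
  push_cast
  linear_combination (-(2 * μ * w * Aw ^ (-k : ℤ) * L p * Aw⁻¹)) * hAA

lemma germ_deriv {d : ℕ} (t0 μ : ℂ) (x : Fin d → ℂ) (k : ℤ) {F : (Fin d → ℂ) → ℂ → ℂ}
    (hF : JA F) (h0 : t0 ≠ 0) :
    deriv (SL t0 μ x k F) =ᶠ[𝓝 (0 : ℂ)]
      fun w => SL t0 μ x (k + 1) (Fw F) w
        + w * (2 * μ * SL t0 μ x (k + 1) (FE (k : ℂ) F) w) := by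
  have hc : ContinuousAt (fun w : ℂ => t0 - μ * w ^ 2) 0 := by fun_prop
  have hne : ∀ᶠ w in 𝓝 (0 : ℂ), t0 - μ * w ^ 2 ≠ 0 := hc.eventually_ne (by simpa using h0)
  filter_upwards [hne] with w hw
  exact (MC t0 μ x k hF w hw).deriv

lemma coeff_rec (m i : ℕ) (h : 2 * (i + 1) ≤ m + 1) :
    (((m + 2).factorial : ℂ) / (((i + 1).factorial : ℂ) * (((m + 2) - 2 * (i + 1)).factorial : ℂ)))
      = (((m + 1).factorial : ℂ) / (((i + 1).factorial : ℂ) * (((m + 1) - 2 * (i + 1)).factorial : ℂ)))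
        + 2 * ((m : ℂ) + 1) * ((m.factorial : ℂ) / ((i.factorial : ℂ) * ((m - 2 * i).factorial : ℂ))) := by
  obtain ⟨r, rfl⟩ : ∃ r, m = 2 * i + 1 + r := ⟨m - (2 * i + 1), by omega⟩
  have e1 : (2 * i + 1 + r) - 2 * i = r + 1 := by omega
  have e2 : (2 * i + 1 + r + 1) - 2 * (i + 1) = r := by omega
  have e3 : (2 * i + 1 + r + 2) - 2 * (i + 1) = r + 1 := by omega
  rw [e1, e2, e3]
  have hfact : ∀ s : ℕ, ((s + 1).factorial : ℂ) = ((s : ℂ) + 1) * (s.factorial : ℂ) := by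
    intro s
    rw [Nat.factorial_succ]
    push_cast
    ring
  rw [show (2 * i + 1 + r + 2) = (2 * i + 1 + r + 1) + 1 from by omega,
    hfact (2 * i + 1 + r + 1), hfact (2 * i + 1 + r), hfact i, hfact r]
  have h1 : ((i.factorial : ℂ)) ≠ 0 := Nat.cast_ne_zero.mpr i.factorial_ne_zero
  have h2 : ((r.factorial : ℂ)) ≠ 0 := Nat.cast_ne_zero.mpr r.factorial_ne_zero
  have h3 : (((2 * i + 1 + r).factorial : ℂ)) ≠ 0 :=
    Nat.cast_ne_zero.mpr (2 * i + 1 + r).factorial_ne_zero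
  have h4 : ((i : ℂ) + 1) ≠ 0 := by
    have : ((i : ℂ) + 1) = ((i + 1 : ℕ) : ℂ) := by push_cast; ring
    rw [this]
    exact Nat.cast_ne_zero.mpr (Nat.succ_ne_zero i)
  have h5 : ((r : ℂ) + 1) ≠ 0 := by
    have : ((r : ℂ) + 1) = ((r + 1 : ℕ) : ℂ) := by push_cast; ring
    rw [this]
    exact Nat.cast_ne_zero.mpr (Nat.succ_ne_zero r)
  push_cast
  field_simp
  ring

lemma coeff_top (p : ℕ) :
    (((2 * p + 2).factorial : ℂ) / (((p + 1).factorial : ℂ) * (((2 * p + 2) - 2 * (p + 1)).factorial : ℂ)))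
      = 2 * ((2 * p + 1 : ℕ) : ℂ) * (((2 * p).factorial : ℂ) / ((p.factorial : ℂ) * (((2 * p) - 2 * p).factorial : ℂ))) := by
  have e1 : (2 * p + 2) - 2 * (p + 1) = 0 := by omega
  have e2 : (2 * p) - 2 * p = 0 := by omega
  rw [e1, e2]
  have hfact : ∀ s : ℕ, ((s + 1).factorial : ℂ) = ((s : ℂ) + 1) * (s.factorial : ℂ) := by
    intro s; rw [Nat.factorial_succ]; push_cast; ring
  rw [show (2 * p + 2) = (2 * p + 1) + 1 from by omega, hfact (2 * p + 1),
    show (2 * p + 1) = (2 * p) + 1 from rfl, hfact (2 * p), hfact p]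
  have h1 : ((p.factorial : ℂ)) ≠ 0 := Nat.cast_ne_zero.mpr p.factorial_ne_zero
  have h3 : (((2 * p).factorial : ℂ)) ≠ 0 := Nat.cast_ne_zero.mpr (2 * p).factorial_ne_zero
  have h4 : ((p : ℂ) + 1) ≠ 0 := by
    have : ((p : ℂ) + 1) = ((p + 1 : ℕ) : ℂ) := by push_cast; ring
    rw [this]; exact Nat.cast_ne_zero.mpr (Nat.succ_ne_zero p)
  simp only [Nat.factorial_zero, Nat.cast_one, mul_one]
  push_cast
  field_simp
  ring

lemma coeff_zero_eq (n : ℕ) :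
    ((n.factorial : ℂ) / (((Nat.factorial 0 : ℕ) : ℂ) * ((n - 2 * 0).factorial : ℂ))) = 1 := by
  simp [Nat.factorial]
  exact n.factorial_ne_zero

lemma comb_step (μ : ℂ) (m : ℕ) (T : ℕ → ℂ) :
    (∑ i ∈ Finset.range ((m + 1) / 2 + 1),
        (((m + 1).factorial : ℂ) / ((i.factorial : ℂ) * (((m + 1) - 2 * i).factorial : ℂ)))
          * μ ^ i * T i)
      + ∑ i ∈ Finset.range (m / 2 + 1),
          2 * ((m : ℂ) + 1)
            * ((m.factorial : ℂ) / ((i.factorial : ℂ) * ((m - 2 * i).factorial : ℂ)))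
            * μ ^ (i + 1) * T (i + 1)
    = ∑ i ∈ Finset.range ((m + 2) / 2 + 1),
        (((m + 2).factorial : ℂ) / ((i.factorial : ℂ) * (((m + 2) - 2 * i).factorial : ℂ)))
          * μ ^ i * T i := by
  set f1 : ℕ → ℂ := fun i =>
    (((m + 1).factorial : ℂ) / ((i.factorial : ℂ) * (((m + 1) - 2 * i).factorial : ℂ)))
      * μ ^ i * T i with hf1
  set g : ℕ → ℂ := fun i =>
    2 * ((m : ℂ) + 1) * ((m.factorial : ℂ) / ((i.factorial : ℂ) * ((m - 2 * i).factorial : ℂ)))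
      * μ ^ (i + 1) * T (i + 1) with hg
  set f2 : ℕ → ℂ := fun i =>
    (((m + 2).factorial : ℂ) / ((i.factorial : ℂ) * (((m + 2) - 2 * i).factorial : ℂ)))
      * μ ^ i * T i with hf2
  have hzero : f1 0 = f2 0 := by
    rw [hf1, hf2]
    simp only
    rw [coeff_zero_eq (m + 1), coeff_zero_eq (m + 2)]
  have hrec : ∀ i : ℕ, 2 * (i + 1) ≤ m + 1 → f1 (i + 1) + g i = f2 (i + 1) := by
    intro i hi
    rw [hf1, hf2, hg]
    simp only
    rw [coeff_rec m i hi]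
    ring
  rcases Nat.even_or_odd m with ⟨p, hp⟩ | ⟨p, hp⟩
  · -- m = 2p
    have hm : m = 2 * p := by omega
    subst hm
    have h1 : (2 * p + 1) / 2 + 1 = p + 1 := by omega
    have h2 : (2 * p) / 2 + 1 = p + 1 := by omega
    have h3 : (2 * p + 2) / 2 + 1 = (p + 1) + 1 := by omega
    rw [h1, h2, h3]
    rw [Finset.sum_range_succ' f1 p, Finset.sum_range_succ g p,
      Finset.sum_range_succ f2 (p + 1), Finset.sum_range_succ' f2 p]
    have htop : g p = f2 (p + 1) := by
      rw [hg, hf2]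
      simp only
      rw [show (2 * p + 2) = 2 * p + 2 from rfl]
      rw [coeff_top p]
      push_cast
      ring
    have hmid : ∑ i ∈ Finset.range p, f1 (i + 1) + ∑ i ∈ Finset.range p, g i
        = ∑ i ∈ Finset.range p, f2 (i + 1) := by
      rw [← Finset.sum_add_distrib]
      refine Finset.sum_congr rfl fun i hi => ?_
      exact hrec i (by have := Finset.mem_range.mp hi; omega)
    linear_combination hmid + hzero + htop
  · -- m = 2p + 1
    have hm : m = 2 * p + 1 := by omega
    subst hm
    have h1 : (2 * p + 1 + 1) / 2 + 1 = (p + 1) + 1 := by omega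
    have h2 : (2 * p + 1) / 2 + 1 = p + 1 := by omega
    have h3 : (2 * p + 1 + 2) / 2 + 1 = (p + 1) + 1 := by omega
    rw [h1, h2, h3]
    rw [Finset.sum_range_succ' f1 (p + 1), Finset.sum_range_succ' f2 (p + 1)]
    have hmid : ∑ i ∈ Finset.range (p + 1), f1 (i + 1) + ∑ i ∈ Finset.range (p + 1), g i
        = ∑ i ∈ Finset.range (p + 1), f2 (i + 1) := by
      rw [← Finset.sum_add_distrib]
      refine Finset.sum_congr rfl fun i hi => ?_
      exact hrec i (by have := Finset.mem_range.mp hi; omega)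
    linear_combination hmid + hzero

lemma main_lemma {d : ℕ} (t0 μ : ℂ) (x : Fin d → ℂ) (h0 : t0 ≠ 0) :
    ∀ (n : ℕ) (k : ℤ) (F : (Fin d → ℂ) → ℂ → ℂ), JA F →
      iteratedDeriv n (SL t0 μ x k F) 0
        = ∑ i ∈ Finset.range (n / 2 + 1),
            ((n.factorial : ℂ) / ((i.factorial : ℂ) * ((n - 2 * i).factorial : ℂ))) * μ ^ i *
              (t0 ^ (-(k + (n : ℤ) - (i : ℤ)) : ℤ) *
                risingEulerFun d ((k : ℂ) + (n : ℂ) - 2 * (i : ℂ)) i (Gj (n - 2 * i) F)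
                  (t0⁻¹ • x)) := by
  intro n
  induction n using Nat.strong_induction_on with
  | _ n IH =>
  intro k F hF
  have hA0 : t0 - μ * (0 : ℂ) ^ 2 ≠ 0 := by simpa using h0
  cases n with
  | zero =>
    rw [iteratedDeriv_zero]
    have hL : SL t0 μ x k F 0 = t0 ^ (-k : ℤ) * F (t0⁻¹ • x) 0 := by
      rw [SL]; norm_num
    rw [hL, Finset.sum_range_one]
    simp [Gj, rEF_zero]
  | succ n' =>
    have hger := germ_deriv t0 μ x k hF h0
    rw [iteratedDeriv_succ', Filter.EventuallyEq.iteratedDeriv_eq n' hger]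
    have aSL1 : AnalyticAt ℂ (SL t0 μ x (k + 1) (Fw F)) 0 := an_SL (ja_fw hF) 0 hA0
    have aSL2 : AnalyticAt ℂ (SL t0 μ x (k + 1) (FE (k : ℂ) F)) 0 := an_SL (ja_fe hF _) 0 hA0
    have aSL2' : AnalyticAt ℂ (fun w : ℂ => 2 * μ * SL t0 μ x (k + 1) (FE (k : ℂ) F) w) 0 :=
      analyticAt_const.mul aSL2
    have aSL2'' : AnalyticAt ℂ
        (fun w : ℂ => w * (2 * μ * SL t0 μ x (k + 1) (FE (k : ℂ) F) w)) 0 :=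
      analyticAt_id.mul aSL2'
    have e1 : iteratedDeriv n' (fun w => SL t0 μ x (k + 1) (Fw F) w
          + w * (2 * μ * SL t0 μ x (k + 1) (FE (k : ℂ) F) w)) 0
        = iteratedDeriv n' (SL t0 μ x (k + 1) (Fw F)) 0
          + iteratedDeriv n' (fun w => w * (2 * μ * SL t0 μ x (k + 1) (FE (k : ℂ) F) w)) 0 :=
      itd_add aSL1 aSL2'' n'
    rw [e1]
    have hIH1 := IH n' (Nat.lt_succ_self n') (k + 1) (Fw F) (ja_fw hF)
    rw [hIH1]
    have hS1 : ∑ i ∈ Finset.range (n' / 2 + 1),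
          ((n'.factorial : ℂ) / ((i.factorial : ℂ) * ((n' - 2 * i).factorial : ℂ))) * μ ^ i *
            (t0 ^ (-((k + 1) + (n' : ℤ) - (i : ℤ)) : ℤ) *
              risingEulerFun d (((k + 1 : ℤ) : ℂ) + (n' : ℂ) - 2 * (i : ℂ)) i
                (Gj (n' - 2 * i) (Fw F)) (t0⁻¹ • x))
        = ∑ i ∈ Finset.range (n' / 2 + 1),
          ((n'.factorial : ℂ) / ((i.factorial : ℂ) * ((n' - 2 * i).factorial : ℂ))) * μ ^ i *
            (t0 ^ (-(k + ((n' + 1 : ℕ) : ℤ) - (i : ℤ)) : ℤ) *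
              risingEulerFun d ((k : ℂ) + ((n' + 1 : ℕ) : ℂ) - 2 * (i : ℂ)) i
                (Gj ((n' + 1) - 2 * i) F) (t0⁻¹ • x)) := by
      refine Finset.sum_congr rfl fun i hi => ?_
      have h2i : 2 * i ≤ n' := by have := Finset.mem_range.mp hi; omega
      have hz : (-((k + 1) + (n' : ℤ) - (i : ℤ)) : ℤ)
          = (-(k + ((n' + 1 : ℕ) : ℤ) - (i : ℤ)) : ℤ) := by push_cast; ring
      have ha : (((k + 1 : ℤ) : ℂ) + (n' : ℂ) - 2 * (i : ℂ))
          = ((k : ℂ) + ((n' + 1 : ℕ) : ℂ) - 2 * (i : ℂ)) := by push_cast; ring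
      have hg : Gj (n' - 2 * i) (Fw F) = Gj ((n' + 1) - 2 * i) F := by
        rw [show (n' + 1) - 2 * i = (n' - 2 * i) + 1 from by omega, Gj_succ hF]
      rw [hz, ha, hg]
    rw [hS1]
    cases n' with
    | zero =>
      rw [iteratedDeriv_zero]
      norm_num [Nat.factorial]
    | succ m =>
      have e2 : iteratedDeriv (m + 1)
            (fun w : ℂ => w * (2 * μ * SL t0 μ x (k + 1) (FE (k : ℂ) F) w)) 0
          = ((m : ℂ) + 1) * iteratedDeriv m
              (fun w : ℂ => 2 * μ * SL t0 μ x (k + 1) (FE (k : ℂ) F) w) 0 :=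
        itd_id_mul aSL2' m
      have e3 : iteratedDeriv m (fun w : ℂ => 2 * μ * SL t0 μ x (k + 1) (FE (k : ℂ) F) w) 0
          = (2 * μ) * iteratedDeriv m (SL t0 μ x (k + 1) (FE (k : ℂ) F)) 0 :=
        itd_cmul aSL2 (2 * μ) m
      rw [e2, e3, IH m (by omega) (k + 1) (FE (k : ℂ) F) (ja_fe hF _)]
      have hS2 : ((m : ℂ) + 1) * ((2 * μ) * ∑ i ∈ Finset.range (m / 2 + 1),
            ((m.factorial : ℂ) / ((i.factorial : ℂ) * ((m - 2 * i).factorial : ℂ))) * μ ^ i *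
              (t0 ^ (-((k + 1) + (m : ℤ) - (i : ℤ)) : ℤ) *
                risingEulerFun d (((k + 1 : ℤ) : ℂ) + (m : ℂ) - 2 * (i : ℂ)) i
                  (Gj (m - 2 * i) (FE (k : ℂ) F)) (t0⁻¹ • x)))
          = ∑ i ∈ Finset.range (m / 2 + 1),
              2 * ((m : ℂ) + 1)
                * ((m.factorial : ℂ) / ((i.factorial : ℂ) * ((m - 2 * i).factorial : ℂ)))
                * μ ^ (i + 1) *
              (t0 ^ (-(k + ((m + 1 + 1 : ℕ) : ℤ) - ((i + 1 : ℕ) : ℤ)) : ℤ) *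
                risingEulerFun d ((k : ℂ) + ((m + 1 + 1 : ℕ) : ℂ) - 2 * ((i + 1 : ℕ) : ℂ)) (i + 1)
                  (Gj ((m + 1 + 1) - 2 * (i + 1)) F) (t0⁻¹ • x)) := by
        rw [Finset.mul_sum, Finset.mul_sum]
        refine Finset.sum_congr rfl fun i hi => ?_
        have h2i : 2 * i ≤ m := by have := Finset.mem_range.mp hi; omega
        have hz : (-((k + 1) + (m : ℤ) - (i : ℤ)) : ℤ)
            = (-(k + ((m + 1 + 1 : ℕ) : ℤ) - ((i + 1 : ℕ) : ℤ)) : ℤ) := by push_cast; ring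
        have hre : risingEulerFun d (((k + 1 : ℤ) : ℂ) + (m : ℂ) - 2 * (i : ℂ)) i
              (Gj (m - 2 * i) (FE (k : ℂ) F))
            = risingEulerFun d ((k : ℂ) + ((m + 1 + 1 : ℕ) : ℂ) - 2 * ((i + 1 : ℕ) : ℂ)) (i + 1)
              (Gj ((m + 1 + 1) - 2 * (i + 1)) F) := by
          have hb : (((k + 1 : ℤ) : ℂ) + (m : ℂ) - 2 * (i : ℂ))
              = ((k : ℂ) + ((m - 2 * i : ℕ) : ℂ)) + 1 := by
            rw [Nat.cast_sub h2i]; push_cast; ring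
          rw [hb, Gj_FE hF (k : ℂ) (m - 2 * i),
            RE_EOp_comm (an_Gj hF (m - 2 * i)) ((k : ℂ) + ((m - 2 * i : ℕ) : ℂ)) i _,
            ← rEF_succ]
          have hidx : m - 2 * i = (m + 1 + 1) - 2 * (i + 1) := by omega
          have hb2 : ((k : ℂ) + ((m - 2 * i : ℕ) : ℂ))
              = (k : ℂ) + ((m + 1 + 1 : ℕ) : ℂ) - 2 * ((i + 1 : ℕ) : ℂ) := by
            rw [Nat.cast_sub h2i]; push_cast; ring
          rw [hb2, hidx]
        rw [hz, hre]
        ring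
      rw [hS2]
      exact comb_step μ m (fun i =>
        t0 ^ (-(k + ((m + 1 + 1 : ℕ) : ℤ) - (i : ℤ)) : ℤ) *
          risingEulerFun d ((k : ℂ) + ((m + 1 + 1 : ℕ) : ℂ) - 2 * (i : ℂ)) i
            (Gj ((m + 1 + 1) - 2 * i) F) (t0⁻¹ • x))


end HPILAux


/-- Lemma 3.2: let `Q` be the quadratic form on `ℂ^{ℓ-1}` with symmetric Gram matrix `S`,
`m > 0`, `v` with `Q(v) = 1`, `R_v z = z - ⟨v,z⟩v`, and `F(z,w)` analytic.  With the slash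
`(F|_k J_v)(z,w) = (Q(z) - m w²)^{-k} F(R_v z/(Q(z)-mw²), w/(Q(z)-mw²))` and, on functions of
`z` alone, `(g|_a J_v)(z) = Q(z)^{-a} g(R_v z/Q(z))`, one has at points with `Q(z) ≠ 0`:
`∂_w^n|_{w=0}(F|_k J_v) = ∑_{i=0}^{⌊n/2⌋} (n!/(i!(n-2i)!)) m^i
    ((E_z+k+n-2i)^{(i)} ∂_w^{n-2i}|_{w=0} F)|_{k+n-i} J_v`. -/
theorem higher_pullback_inversion_lemma (d : ℕ) (S : Matrix (Fin d) (Fin d) ℂ)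
    (hS : S.IsSymm)
    (Q : (Fin d → ℂ) → ℂ) (hQ : ∀ z, Q z = (1 / 2 : ℂ) * (z ⬝ᵥ S.mulVec z))
    (m : ℝ) (hm : 0 < m)
    (v : Fin d → ℂ) (hv : Q v = 1)
    (Rv : (Fin d → ℂ) → (Fin d → ℂ)) (hRv : ∀ z, Rv z = z - (v ⬝ᵥ S.mulVec z) • v)
    (F : (Fin d → ℂ) → ℂ → ℂ)
    (hF : ∀ p : (Fin d → ℂ) × ℂ, AnalyticAt ℂ (fun q : (Fin d → ℂ) × ℂ => F q.1 q.2) p)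
    (k : ℤ) (n : ℕ) (z : Fin d → ℂ) (hz : Q z ≠ 0) :
    iteratedDeriv n
        (fun w : ℂ =>
          (Q z - (m : ℂ) * w ^ 2) ^ (-k : ℤ) *
            F ((Q z - (m : ℂ) * w ^ 2)⁻¹ • Rv z) ((Q z - (m : ℂ) * w ^ 2)⁻¹ * w)) 0
      = ∑ i ∈ Finset.range (n / 2 + 1),
          ((n.factorial : ℂ) / ((i.factorial : ℂ) * ((n - 2 * i).factorial : ℂ))) *
            (m : ℂ) ^ i *
            (Q z ^ (-(k + n - i) : ℤ) *
              risingEulerFun d ((k : ℂ) + n - 2 * i) i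
                (fun z' => iteratedDeriv (n - 2 * i) (fun w : ℂ => F z' w) 0)
                ((Q z)⁻¹ • Rv z)) := by
  exact main_lemma (Q z) (m : ℂ) (Rv z) hz n k F hF
end
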